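/- arXiv:2501.04218 — 7 statements merged into one kernel-verified Lean document; each statement's English description precedes it below -/
import Mathlib

section
/- For the NTS characteristic exponent ψ⁰(ξ) = δ[(α² - (β + iξ)²)^{ν/2} - (α² - β²)^{ν/2}] with ν ∈ (0,2), δ > 0, |β| < α, for every φ ∈ (-π/2, π/2), ψ⁰(ρe^{iφ}) = δ e^{iφν} ρ^ν + O(ρ^{ν-1}) + O(1) as ρ → +∞. -/
open Complex Real Filter Asymptotics

/-- NTS: for every `φ ∈ (-π/2, π/2)`,
`ψ⁰(ρ e^{iφ}) = δ e^{iφν} ρ^ν + O(ρ^{ν-1}) + O(1)` as `ρ → +∞`. -/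
theorem stmt_2 (ν δ α β : ℝ) (hν : ν ∈ Set.Ioo (0 : ℝ) 2) (hδ : 0 < δ) (hβ : |β| < α)
    (ψ : ℂ → ℂ)
    (hψ : ∀ ξ : ℂ, ψ ξ =
      (δ : ℂ) * (((α : ℂ) ^ 2 - ((β : ℂ) + Complex.I * ξ) ^ 2) ^ ((ν : ℂ) / 2)
        - ((α : ℂ) ^ 2 - (β : ℂ) ^ 2) ^ ((ν : ℂ) / 2)))
    (φ : ℝ) (hφ : φ ∈ Set.Ioo (-(π / 2)) (π / 2)) :
    ∃ f g : ℝ → ℂ,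
      (∀ᶠ ρ : ℝ in atTop,
        ψ ((ρ : ℂ) * Complex.exp (Complex.I * φ))
          = (δ : ℂ) * Complex.exp (Complex.I * φ * ν) * (ρ : ℂ) ^ (ν : ℂ) + f ρ + g ρ) ∧
      f =O[atTop] (fun ρ : ℝ => ρ ^ (ν - 1)) ∧
      g =O[atTop] (fun _ : ℝ => (1 : ℝ)) := by
  obtain ⟨hν0, hν2⟩ := hν
  obtain ⟨hφ1, hφ2⟩ := hφ
  have hφabs : |φ| < π / 2 := abs_lt.mpr ⟨by linarith, hφ2⟩
  -- key facts about `ξ = ρ e^{iφ}` for `ρ > 0`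
  have hξne : ∀ ρ : ℝ, 0 < ρ → ((ρ:ℂ) * Complex.exp (Complex.I * φ)) ≠ 0 := fun ρ hρ =>
    mul_ne_zero (by exact_mod_cast hρ.ne') (Complex.exp_ne_zero _)
  have hξabs : ∀ ρ : ℝ, 0 < ρ → ‖(ρ:ℂ) * Complex.exp (Complex.I * φ)‖ = ρ := by
    intro ρ hρ
    rw [norm_mul, Complex.norm_real, Complex.norm_exp, Real.norm_eq_abs, abs_of_pos hρ]
    simp
  have hkey : ∀ ρ : ℝ, 0 < ρ →
      Complex.arg (((ρ:ℂ) * Complex.exp (Complex.I * φ))^2) = 2*φ ∧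
      (((ρ:ℂ) * Complex.exp (Complex.I * φ))^2) ^ ((ν:ℂ)/2)
        = Complex.exp (Complex.I * φ * ν) * (ρ:ℂ) ^ (ν:ℂ) := by
    intro ρ hρ
    have hBne : ((ρ:ℂ) * Complex.exp (Complex.I * φ))^2 ≠ 0 := pow_ne_zero 2 (hξne ρ hρ)
    have hBval : ((ρ:ℂ) * Complex.exp (Complex.I * φ))^2
        = ((ρ^2 : ℝ) : ℂ) * Complex.exp ((2*φ : ℝ) * Complex.I) := by
      rw [mul_pow, sq (Complex.exp _), ← Complex.exp_add]
      push_cast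
      ring_nf
    have harg : Complex.arg (((ρ:ℂ) * Complex.exp (Complex.I * φ))^2) = 2*φ := by
      rw [hBval, Complex.arg_real_mul _ (by positivity), Complex.exp_mul_I]
      have h := abs_lt.mp hφabs
      exact Complex.arg_cos_add_sin_mul_I (θ := 2*φ) ⟨by linarith [h.1], by linarith [h.2]⟩
    have habs : ‖((ρ:ℂ) * Complex.exp (Complex.I * φ))^2‖ = ρ^2 := by
      rw [hBval, norm_mul, Complex.norm_real, Real.norm_eq_abs, Complex.norm_exp]
      simp [abs_of_pos (pow_pos hρ 2)]
    have hlog : Complex.log (((ρ:ℂ) * Complex.exp (Complex.I * φ))^2)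
        = ((Real.log (ρ^2) : ℝ) : ℂ) + ((2*φ : ℝ) : ℂ) * Complex.I := by
      apply Complex.ext <;> simp [Complex.log_re, Complex.log_im, habs, harg]
    refine ⟨harg, ?_⟩
    rw [Complex.cpow_def_of_ne_zero hBne, hlog, ← Complex.ofReal_cpow hρ.le,
      Real.rpow_def_of_pos hρ, Complex.ofReal_exp, ← Complex.exp_add]
    congr 1
    have h2 : Real.log (ρ^2) = 2 * Real.log ρ := by
      rw [sq, Real.log_mul hρ.ne' hρ.ne']; ring
    rw [h2]
    push_cast
    ring
  refine ⟨fun ρ : ℝ => (δ : ℂ) *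
      ((((α : ℂ) ^ 2 - ((β : ℂ) + Complex.I * ((ρ:ℂ) * Complex.exp (Complex.I * φ))) ^ 2)
          ^ ((ν : ℂ) / 2))
        - (((ρ:ℂ) * Complex.exp (Complex.I * φ))^2) ^ ((ν : ℂ) / 2)),
    fun _ : ℝ => -((δ : ℂ) * ((α : ℂ) ^ 2 - (β : ℂ) ^ 2) ^ ((ν : ℂ) / 2)), ?_, ?_, ?_⟩
  · filter_upwards [eventually_gt_atTop (0:ℝ)] with ρ hρ
    rw [hψ, (hkey ρ hρ).2]
    ring
  · -- the O(ρ^{ν-1}) bound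
    have hC0 : (0:ℝ) < |α^2 - β^2| + 2*|β| + 1 := by positivity
    set C : ℝ := |α^2 - β^2| + 2*|β| + 1 with hCdef
    have hε : 0 < π - 2*|φ| := by linarith [hφabs]
    rw [isBigO_iff]
    refine ⟨2*δ*ν*C, ?_⟩
    filter_upwards [eventually_ge_atTop
      (max (max 1 (2*C)) (max (ν*C) (2*C/(π-2*|φ|) + 1)))] with ρ hρR
    have hρ1 : (1:ℝ) ≤ ρ := le_trans (le_trans (le_max_left _ _) (le_max_left _ _)) hρR
    have hρ2C : 2*C ≤ ρ := le_trans (le_trans (le_max_right _ _) (le_max_left _ _)) hρR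
    have hρνC : ν*C ≤ ρ := le_trans (le_trans (le_max_left _ _) (le_max_right _ _)) hρR
    have hρarg : 2*C/(π-2*|φ|) + 1 ≤ ρ :=
      le_trans (le_trans (le_max_right _ _) (le_max_right _ _)) hρR
    have hρ0 : (0:ℝ) < ρ := lt_of_lt_of_le one_pos hρ1
    have hne := hξne ρ hρ0
    have habsρ := hξabs ρ hρ0
    have hargρ := (hkey ρ hρ0).1
    have hBsρ := (hkey ρ hρ0).2
    set ξ : ℂ := (ρ:ℂ) * Complex.exp (Complex.I * φ) with hξdef
    set w : ℂ := (((α:ℂ)^2 - (β:ℂ)^2) - 2*Complex.I*(β:ℂ)*ξ)/ξ^2 with hwdef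
    have hξ2ne : ξ^2 ≠ 0 := pow_ne_zero 2 hne
    have hAfact : (α:ℂ)^2 - ((β:ℂ) + Complex.I*ξ)^2 = ξ^2 * (1 + w) := by
      rw [hwdef, mul_add, mul_one, mul_div_cancel₀ _ hξ2ne]
      linear_combination (-(ξ^2 : ℂ)) * Complex.I_sq
    have hwnorm : ‖w‖ ≤ C/ρ := by
      rw [hwdef, norm_div, norm_pow, habsρ]
      have h1 : ‖((α:ℂ)^2 - (β:ℂ)^2) - 2*Complex.I*(β:ℂ)*ξ‖ ≤ C * ρ := by
        have h2 : ‖2*Complex.I*(β:ℂ)*ξ‖ = 2 * |β| * ρ := by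
          rw [norm_mul, norm_mul, norm_mul, Complex.norm_I, Complex.norm_real,
            habsρ, Real.norm_eq_abs, RCLike.norm_ofNat]
          ring
        have h3 : ‖(α:ℂ)^2 - (β:ℂ)^2‖ = |α^2 - β^2| := by
          rw [show (α:ℂ)^2 - (β:ℂ)^2 = ((α^2 - β^2 : ℝ) : ℂ) by push_cast; ring,
            Complex.norm_real, Real.norm_eq_abs]
        calc ‖((α:ℂ)^2 - (β:ℂ)^2) - 2*Complex.I*(β:ℂ)*ξ‖
            ≤ ‖(α:ℂ)^2 - (β:ℂ)^2‖ + ‖2*Complex.I*(β:ℂ)*ξ‖ := norm_sub_le _ _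
          _ = |α^2 - β^2| + 2 * |β| * ρ := by rw [h2, h3]
          _ ≤ C * ρ := by nlinarith [abs_nonneg (α^2 - β^2), abs_nonneg β]
      calc ‖((α:ℂ)^2 - (β:ℂ)^2) - 2*Complex.I*(β:ℂ)*ξ‖ / ρ^2
          ≤ (C * ρ) / ρ^2 := by gcongr
        _ = C/ρ := by rw [sq, mul_comm C ρ, mul_div_mul_left _ _ hρ0.ne']
    have hwhalf : ‖w‖ ≤ 1/2 := by
      refine le_trans hwnorm ?_
      rw [div_le_iff₀ hρ0]
      linarith
    have h1w : (1:ℂ) + w ≠ 0 := by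
      intro h
      have hw1 : w = -1 := by linear_combination h
      rw [hw1, norm_neg, norm_one] at hwhalf
      norm_num at hwhalf
    have hL : ‖Complex.log (1+w)‖ ≤ 2*(C/ρ) := by
      refine le_trans (Complex.norm_log_one_add_half_le_self hwhalf) ?_
      nlinarith [norm_nonneg w, hwnorm]
    have harg1w : |Complex.arg (1+w)| ≤ 2*(C/ρ) := by
      rw [← Complex.log_im]
      refine le_trans (Complex.abs_im_le_norm _) ?_
      exact hL
    have hsmall : 2*(C/ρ) < π - 2*|φ| := by
      have h4 : 2*C/(π-2*|φ|) < ρ := lt_of_lt_of_le (by linarith) hρarg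
      rw [div_lt_iff₀ hε] at h4
      rw [← mul_div_assoc, div_lt_iff₀ hρ0]
      nlinarith
    have hargcond : Complex.arg (ξ^2) + Complex.arg (1+w) ∈ Set.Ioc (-π) π := by
      rw [hargρ]
      have h5 := abs_le.mp harg1w
      have h6 := le_abs_self φ
      have h7 := neg_abs_le φ
      constructor
      · linarith
      · linarith
    have hAne : (α:ℂ)^2 - ((β:ℂ) + Complex.I*ξ)^2 ≠ 0 := by
      rw [hAfact]; exact mul_ne_zero hξ2ne h1w
    have hlogA : Complex.log ((α:ℂ)^2 - ((β:ℂ) + Complex.I*ξ)^2)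
        = Complex.log (ξ^2) + Complex.log (1+w) := by
      rw [hAfact]
      exact Complex.log_mul hξ2ne h1w hargcond
    have hAs : ((α:ℂ)^2 - ((β:ℂ) + Complex.I*ξ)^2) ^ ((ν:ℂ)/2)
        = (ξ^2) ^ ((ν:ℂ)/2) * Complex.exp (Complex.log (1+w) * ((ν:ℂ)/2)) := by
      rw [Complex.cpow_def_of_ne_zero hAne, hlogA, add_mul, Complex.exp_add,
        Complex.cpow_def_of_ne_zero hξ2ne]
    have hnormBs : ‖(ξ^2) ^ ((ν:ℂ)/2)‖ = ρ ^ ν := by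
      rw [hBsρ, norm_mul, ← Complex.ofReal_cpow hρ0.le, Complex.norm_real,
        Real.norm_eq_abs, _root_.abs_of_nonneg (Real.rpow_nonneg hρ0.le ν),
        Complex.norm_exp]
      simp
    have hsnorm : ‖((ν:ℂ)/2)‖ = ν/2 := by
      rw [norm_div, Complex.norm_real, Real.norm_eq_abs, abs_of_pos hν0]
      norm_num
    have hLs : ‖Complex.log (1+w) * ((ν:ℂ)/2)‖ ≤ ν*C/ρ := by
      rw [norm_mul, hsnorm]
      calc ‖Complex.log (1+w)‖ * (ν/2) ≤ (2*(C/ρ)) * (ν/2) :=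
            mul_le_mul_of_nonneg_right hL (by positivity)
        _ = ν*C/ρ := by field_simp
    have hexp : ‖Complex.exp (Complex.log (1+w) * ((ν:ℂ)/2)) - 1‖ ≤ 2*(ν*C/ρ) := by
      have h8 : ‖Complex.log (1+w) * ((ν:ℂ)/2)‖ ≤ 1 := by
        refine le_trans hLs ?_
        rw [div_le_one hρ0]
        linarith
      have h9 := Complex.norm_exp_sub_one_le (x := Complex.log (1+w) * ((ν:ℂ)/2))
        h8
      refine le_trans h9 ?_
      linarith
    beta_reduce
    rw [hAs, show (δ:ℂ) * ((ξ^2) ^ ((ν:ℂ)/2) * Complex.exp (Complex.log (1+w) * ((ν:ℂ)/2))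
        - (ξ^2) ^ ((ν:ℂ)/2))
      = (δ:ℂ) * ((ξ^2) ^ ((ν:ℂ)/2)) * (Complex.exp (Complex.log (1+w) * ((ν:ℂ)/2)) - 1)
      from by ring]
    rw [norm_mul, norm_mul, Complex.norm_real, Real.norm_eq_abs, abs_of_pos hδ, hnormBs,
      Real.norm_eq_abs, _root_.abs_of_nonneg (Real.rpow_nonneg hρ0.le _)]
    calc δ * ρ ^ ν * ‖Complex.exp (Complex.log (1+w) * ((ν:ℂ)/2)) - 1‖
        ≤ δ * ρ ^ ν * (2*(ν*C/ρ)) := by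
          refine mul_le_mul_of_nonneg_left hexp ?_
          positivity
      _ = 2*δ*ν*C * ρ ^ (ν-1) := by
          rw [Real.rpow_sub hρ0, Real.rpow_one]
          field_simp
  · exact isBigO_const_const _ one_ne_zero atTop
end

section
/- The CGMY/KoBoL characteristic exponent ψ⁰(ξ) = cΓ(-ν)[(-λ₋)^ν - (-λ₋ - iξ)^ν + λ₊^ν - (λ₊ + iξ)^ν], with c > 0, ν ∈ (0,2)\{1}, λ₋ < 0 < λ₊, satisfies for every φ ∈ (-π/2, π/2): ψ⁰(ρe^{iφ}) ~ -2cΓ(-ν)cos(νπ/2)e^{iνφ} ρ^ν as ρ → +∞. -/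
open Complex Real Filter Asymptotics

lemma log_exp_I (θ : ℝ) (h1 : -π < θ) (h2 : θ < π) :
    Complex.log (Complex.exp (Complex.I * θ)) = Complex.I * θ := by
  apply Complex.log_exp <;> simp [Complex.mul_im] <;> [exact h1; exact h2.le]

lemma exp_I_slit (θ : ℝ) (h1 : -π < θ) (h2 : θ < π) :
    Complex.exp (Complex.I * θ) ∈ Complex.slitPlane := by
  rw [Complex.mem_slitPlane_iff]
  rcases eq_or_ne (Real.sin θ) 0 with hs | hs
  · left
    have hθ0 : θ = 0 := (Real.sin_eq_zero_iff_of_lt_of_lt h1 h2).mp hs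
    simp [hθ0]
  · right
    simpa [Complex.exp_im, Complex.mul_re, Complex.mul_im] using hs

lemma key (a ν θ : ℝ) (ha : 0 < a) (h1 : -π < θ) (h2 : θ < π) :
    Tendsto (fun ρ : ℝ => ((a : ℂ) + ρ * Complex.exp (Complex.I * θ)) ^ (ν : ℂ) /
      ((ρ : ℂ) ^ (ν : ℂ) * Complex.exp (Complex.I * ν * θ))) atTop (nhds 1) := by
  set e : ℂ := Complex.exp (Complex.I * θ) with he
  -- limit of a/ρ + e
  have h1' : Tendsto (fun ρ : ℝ => (a : ℂ) / ρ + e) atTop (nhds e) := by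
    have : Tendsto (fun ρ : ℝ => (a : ℂ) / ρ) atTop (nhds 0) := by
      have hr : Tendsto (fun ρ : ℝ => a / ρ) atTop (nhds 0) := by
        simpa using (tendsto_const_nhds.div_atTop (l := atTop) tendsto_id (f := fun _ : ℝ => a))
      have h0 : Tendsto (fun ρ : ℝ => ((a / ρ : ℝ) : ℂ)) atTop (nhds ((0 : ℝ) : ℂ)) :=
        (Complex.continuous_ofReal.tendsto _).comp hr
      simpa [Complex.ofReal_div] using h0
    simpa using this.add tendsto_const_nhds
  have hlog : Tendsto (fun ρ : ℝ => Complex.log ((a : ℂ) / ρ + e)) atTop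
      (nhds (Complex.I * θ)) := by
    have := (continuousAt_clog (exp_I_slit θ h1 h2)).tendsto.comp h1'
    rwa [← he, log_exp_I θ h1 h2] at this
  have hmain : Tendsto (fun ρ : ℝ =>
      Complex.exp ((Complex.log ((a : ℂ) / ρ + e)) * ν - Complex.I * ν * θ)) atTop (nhds 1) := by
    have : Tendsto (fun ρ : ℝ => (Complex.log ((a : ℂ) / ρ + e)) * ν - Complex.I * ν * θ)
        atTop (nhds 0) := by
      have := (hlog.mul_const (ν : ℂ)).sub_const (Complex.I * ν * θ)
      convert this using 2
      ring
    simpa [Function.comp_def] using (Complex.continuous_exp.tendsto 0).comp this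
  apply hmain.congr'
  filter_upwards [eventually_gt_atTop (0 : ℝ)] with ρ hρ
  have hρC : (ρ : ℂ) ≠ 0 := by exact_mod_cast hρ.ne'
  set w : ℂ := (a : ℂ) / ρ + e with hw
  have hwne : w ≠ 0 := by
    rcases eq_or_ne (Real.sin θ) 0 with hs | hs
    · have hθ0 : θ = 0 := (Real.sin_eq_zero_iff_of_lt_of_lt h1 h2).mp hs
      have : 0 < w.re := by
        simp [hw, he, hθ0, Complex.add_re, Complex.div_re]
        positivity
      intro h; rw [h] at this; simp at this
    · have : w.im ≠ 0 := by
        have : e.im = Real.sin θ := by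
          simp [he, Complex.exp_im, Complex.mul_re, Complex.mul_im]
        simp [hw, Complex.add_im, this, hs]
      intro h; rw [h] at this; simp at this
  have hbase : (a : ℂ) + ρ * e = (ρ : ℂ) * w := by
    rw [hw]; field_simp
  have hne : (a : ℂ) + ρ * e ≠ 0 := by
    rw [hbase]; exact mul_ne_zero hρC hwne
  rw [hbase, Complex.cpow_def_of_ne_zero (mul_ne_zero hρC hwne),
    Complex.cpow_def_of_ne_zero hρC, Complex.log_ofReal_mul hρ hwne,
    ← Complex.ofReal_log hρ.le]
  rw [← Complex.exp_add, ← Complex.exp_sub]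
  congr 1
  ring

lemma alg (A K E R e1 e2 C0 Tm Tp : ℂ) (hK : K ≠ 0) (hE : E ≠ 0) (hR : R ≠ 0)
    (h1 : e1 ≠ 0) (h2 : e2 ≠ 0) :
    A * C0 / (K * E) * R⁻¹ +
      (-(A * e1 / K) * (Tm / (R * (E * e1))) + -(A * e2 / K) * (Tp / (R * (E * e2))))
    = A * (C0 - Tm - Tp) / (K * E * R) := by
  have t1 : A * C0 / (K * E) * R⁻¹ = A * C0 / (K * E * R) := by
    rw [division_def, division_def, mul_assoc, ← mul_inv]
  have t2 : A * e1 / K * (Tm / (R * (E * e1))) = A * Tm / (K * E * R) := by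
    rw [div_mul_div_comm, show A * e1 * Tm = A * Tm * e1 by ring,
      show K * (R * (E * e1)) = K * E * R * e1 by ring]
    exact mul_div_mul_right _ _ h1
  have t3 : A * e2 / K * (Tp / (R * (E * e2))) = A * Tp / (K * E * R) := by
    rw [div_mul_div_comm, show A * e2 * Tp = A * Tp * e2 by ring,
      show K * (R * (E * e2)) = K * E * R * e2 by ring]
    exact mul_div_mul_right _ _ h2
  rw [t1, neg_mul, neg_mul, t2, t3, ← neg_div, ← neg_div, ← add_div, ← add_div]
  congr 1
  ring

/-- CGMY/KoBoL: for every `φ ∈ (-π/2, π/2)`,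
`ψ⁰(ρ e^{iφ}) ~ -2cΓ(-ν)cos(νπ/2) e^{iνφ} ρ^ν` as `ρ → +∞`. -/
theorem stmt_3 (c ν lm lp : ℝ) (hc : 0 < c) (hν : ν ∈ Set.Ioo (0 : ℝ) 2) (hν1 : ν ≠ 1)
    (hlm : lm < 0) (hlp : 0 < lp)
    (ψ : ℂ → ℂ)
    (hψ : ∀ ξ : ℂ, ψ ξ = (c : ℂ) * (Real.Gamma (-ν) : ℂ) *
      (((-lm : ℂ)) ^ (ν : ℂ) - ((-lm : ℂ) - Complex.I * ξ) ^ (ν : ℂ)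
        + ((lp : ℂ)) ^ (ν : ℂ) - ((lp : ℂ) + Complex.I * ξ) ^ (ν : ℂ)))
    (φ : ℝ) (hφ : φ ∈ Set.Ioo (-(π / 2)) (π / 2)) :
    Tendsto (fun ρ : ℝ =>
        ψ ((ρ : ℂ) * Complex.exp (Complex.I * φ)) /
          ((-2 * c * Real.Gamma (-ν) * Real.cos (ν * π / 2) : ℂ)
            * Complex.exp (Complex.I * ν * φ) * (ρ : ℂ) ^ (ν : ℂ)))
      atTop (nhds 1) := by
  obtain ⟨hν0, hν2⟩ := hν
  obtain ⟨hφ1, hφ2⟩ := hφ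
  have hπ := Real.pi_pos
  -- nonvanishing of Gamma and cos
  have hΓ : Real.Gamma (-ν) ≠ 0 := by
    refine Real.Gamma_ne_zero fun m h => ?_
    have hm : ν = (m : ℝ) := by linarith [h]
    have hm2 : m < 2 := by exact_mod_cast hm ▸ hν2
    interval_cases m
    · simp at hm; linarith
    · simp at hm; exact hν1 hm
  have hcos : Real.cos (ν * π / 2) ≠ 0 := by
    intro h
    obtain ⟨k, hk⟩ := Real.cos_eq_zero_iff.mp h
    have hv : ν = 2 * (k : ℝ) + 1 := by
      field_simp at hk
      rcases hk with hk | hk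
      · linarith
    have h1 : (0 : ℤ) < 2 * k + 1 := by exact_mod_cast (by push_cast; linarith : (0:ℝ) < 2*(k:ℝ)+1)
    have h2 : (2 * k + 1 : ℤ) < 2 := by exact_mod_cast (by push_cast; linarith : (2*(k:ℝ)+1 : ℝ) < 2)
    have : k = 0 := by omega
    rw [this] at hv
    simp at hv
    exact hν1 hv
  -- constants
  set Γ := Real.Gamma (-ν) with hΓdef
  set A : ℂ := (c : ℂ) * (Γ : ℂ) with hA
  set K : ℂ := (-2 * c * Γ * Real.cos (ν * π / 2) : ℂ) with hK
  set E : ℂ := Complex.exp (Complex.I * ν * φ) with hE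
  have hKne : K ≠ 0 := by
    have hKR : (-2 * c * Γ * Real.cos (ν * π / 2) : ℝ) ≠ 0 :=
      mul_ne_zero (mul_ne_zero (by norm_num [hc.ne']) hΓ) hcos
    rw [hK]; exact_mod_cast hKR
  have hEne : E ≠ 0 := Complex.exp_ne_zero _
  set zc : ℂ := ((ν * π / 2 : ℝ) : ℂ) with hzc
  set Cm : ℂ := -(A * Complex.exp (-zc * Complex.I) / K) with hCm
  set Cp : ℂ := -(A * Complex.exp (zc * Complex.I) / K) with hCp
  set C0 : ℂ := ((-lm : ℂ)) ^ (ν : ℂ) + ((lp : ℂ)) ^ (ν : ℂ) with hC0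
  set CA : ℂ := A * C0 / (K * E) with hCA
  set θm : ℝ := φ - π / 2 with hθm
  set θp : ℝ := φ + π / 2 with hθp
  -- three limits
  have hQm := key (-lm) ν θm (by linarith) (by rw [hθm]; linarith) (by rw [hθm]; linarith)
  have hQp := key lp ν θp hlp (by rw [hθp]; linarith) (by rw [hθp]; linarith)
  have hRinv : Tendsto (fun ρ : ℝ => ((ρ : ℂ) ^ (ν : ℂ))⁻¹) atTop (nhds 0) := by
    have hr : Tendsto (fun ρ : ℝ => (ρ ^ ν)⁻¹) atTop (nhds 0) :=
      (tendsto_rpow_atTop hν0).inv_tendsto_atTop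
    have h0 : Tendsto (fun ρ : ℝ => (((ρ ^ ν)⁻¹ : ℝ) : ℂ)) atTop (nhds ((0 : ℝ) : ℂ)) :=
      (Complex.continuous_ofReal.tendsto _).comp hr
    apply Tendsto.congr' _ (by simpa using h0)
    filter_upwards [eventually_gt_atTop (0 : ℝ)] with ρ hρ
    rw [← Complex.ofReal_cpow hρ.le]
  -- sum of the two constants is 1
  have hCsum : Cm + Cp = 1 := by
    have hsum : Complex.exp (-zc * Complex.I) + Complex.exp (zc * Complex.I)
        = 2 * ((Real.cos (ν * π / 2) : ℝ) : ℂ) := by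
      rw [Complex.exp_mul_I, Complex.exp_mul_I, Complex.cos_neg, Complex.sin_neg, hzc,
        ← Complex.ofReal_cos]
      ring
    have hstep : Cm + Cp = -(A * (Complex.exp (-zc * Complex.I) + Complex.exp (zc * Complex.I))) / K := by
      rw [hCm, hCp]; ring
    rw [hstep, hsum, div_eq_one_iff_eq hKne, hA, hK]
    push_cast
    ring
  -- the combined limit
  have hG := ((hRinv.const_mul CA).add ((hQm.const_mul Cm).add (hQp.const_mul Cp)))
  have hval : CA * 0 + (Cm * 1 + Cp * 1) = 1 := by rw [mul_zero, mul_one, mul_one, zero_add, hCsum]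
  rw [hval] at hG
  -- eventual equality
  apply hG.congr'
  filter_upwards [eventually_gt_atTop (0 : ℝ)] with ρ hρ
  have hρC : (ρ : ℂ) ≠ 0 := by exact_mod_cast hρ.ne'
  have hRne : (ρ : ℂ) ^ (ν : ℂ) ≠ 0 := by
    rw [Complex.cpow_def_of_ne_zero hρC]; exact Complex.exp_ne_zero _
  have hI2 : Complex.exp (Complex.I * ((π / 2 : ℝ) : ℂ)) = Complex.I := by
    rw [show Complex.I * ((π / 2 : ℝ) : ℂ) = ((π / 2 : ℝ) : ℂ) * Complex.I by ring,
      Complex.exp_mul_I, ← Complex.ofReal_cos, ← Complex.ofReal_sin]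
    simp
  have hem : Complex.exp (Complex.I * (θm : ℂ)) = Complex.exp (Complex.I * φ) * (-Complex.I) := by
    rw [show Complex.I * (θm : ℂ) = Complex.I * (φ : ℂ) - Complex.I * ((π / 2 : ℝ) : ℂ) by
      rw [hθm]; push_cast; ring, Complex.exp_sub, hI2]
    rw [div_eq_mul_inv, Complex.inv_I]
  have hep : Complex.exp (Complex.I * (θp : ℂ)) = Complex.exp (Complex.I * φ) * Complex.I := by
    rw [show Complex.I * (θp : ℂ) = Complex.I * (φ : ℂ) + Complex.I * ((π / 2 : ℝ) : ℂ) by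
      rw [hθp]; push_cast; ring, Complex.exp_add, hI2]
  have hbm : ((-lm : ℂ)) - Complex.I * ((ρ : ℂ) * Complex.exp (Complex.I * φ))
      = ((-lm : ℝ) : ℂ) + (ρ : ℂ) * Complex.exp (Complex.I * (θm : ℂ)) := by
    rw [hem]; push_cast; ring
  have hbp : ((lp : ℂ)) + Complex.I * ((ρ : ℂ) * Complex.exp (Complex.I * φ))
      = ((lp : ℝ) : ℂ) + (ρ : ℂ) * Complex.exp (Complex.I * (θp : ℂ)) := by
    rw [hep]; push_cast; ring
  have hEm : Complex.exp (Complex.I * ν * (θm : ℂ)) = E * Complex.exp (-zc * Complex.I) := by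
    rw [hE, ← Complex.exp_add]
    congr 1
    rw [hθm, hzc]; push_cast; ring
  have hEp : Complex.exp (Complex.I * ν * (θp : ℂ)) = E * Complex.exp (zc * Complex.I) := by
    rw [hE, ← Complex.exp_add]
    congr 1
    rw [hθp, hzc]; push_cast; ring
  rw [hψ, hbm, hbp]
  simp only [hEm, hEp]
  rw [hCA, hCm, hCp]
  have hexm : Complex.exp (-zc * Complex.I) ≠ 0 := Complex.exp_ne_zero _
  have hexp : Complex.exp (zc * Complex.I) ≠ 0 := Complex.exp_ne_zero _
  have h := alg A K E ((ρ : ℂ) ^ (ν : ℂ)) (Complex.exp (-zc * Complex.I))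
    (Complex.exp (zc * Complex.I)) C0
    ((((-lm : ℝ) : ℂ) + (ρ : ℂ) * Complex.exp (Complex.I * (θm : ℂ))) ^ (ν : ℂ))
    ((((lp : ℝ) : ℂ) + (ρ : ℂ) * Complex.exp (Complex.I * (θp : ℂ))) ^ (ν : ℂ))
    hKne hEne hRne hexm hexp
  exact h.trans (by rw [hC0]; ring)
end

section
/- Let 𝒢 be a nonnegative measure on (0, +∞). Then the function f₊(x) = ∫_{(0,∞)} e^{-tx} 𝒢(dt), x > 0, satisfies ∫₀^∞ min(x², 1) f₊(x) dx < ∞ (i.e., f₊ is a Lévy density on (0, ∞)) if and only if ∫_{(0,∞)} (t + t³)^{-1} 𝒢(dt) < ∞. -/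
open MeasureTheory Real Set

/-- The inner integral `g t = ∫₀^∞ min(x²,1) e^{-tx} dx` (as a lintegral). -/
noncomputable def levyG (t : ℝ) : ENNReal :=
  ∫⁻ x in Set.Ioi (0 : ℝ), ENNReal.ofReal (min (x ^ 2) 1 * Real.exp (-(t * x)))

lemma min_sq_nonneg (x : ℝ) : 0 ≤ min (x ^ 2) 1 := le_min (sq_nonneg x) zero_le_one

/-- `∫₀^∞ e^{-tx} dx = 1/t`. -/
lemma lint_exp {t : ℝ} (ht : 0 < t) :
    ∫⁻ x in Set.Ioi (0 : ℝ), ENNReal.ofReal (Real.exp (-(t * x))) = ENNReal.ofReal t⁻¹ := by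
  have hint : IntegrableOn (fun x : ℝ => Real.exp (-(t * x))) (Set.Ioi 0) := by
    simpa [neg_mul] using exp_neg_integrableOn_Ioi 0 ht
  rw [← ofReal_integral_eq_lintegral_ofReal hint (ae_of_all _ fun x => (exp_pos _).le)]
  congr 1
  have h := Real.integral_rpow_mul_exp_neg_mul_Ioi (a := 1) one_pos ht
  simpa [Real.Gamma_one] using h

/-- `∫₀^∞ x² e^{-tx} dx = 2/t³`. -/
lemma lint_sq_exp {t : ℝ} (ht : 0 < t) :
    ∫⁻ x in Set.Ioi (0 : ℝ), ENNReal.ofReal (x ^ 2 * Real.exp (-(t * x)))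
      = ENNReal.ofReal (2 / t ^ 3) := by
  have heq : Set.EqOn (fun x : ℝ => x ^ (2 : ℝ) * Real.exp (-t * x ^ (1 : ℝ)))
      (fun x : ℝ => x ^ 2 * Real.exp (-(t * x))) (Set.Ioi 0) := by
    intro x _
    have h2 : (x : ℝ) ^ (2 : ℝ) = x ^ 2 := by
      rw [show (2 : ℝ) = ((2 : ℕ) : ℝ) by norm_num, Real.rpow_natCast]
    simp [h2, Real.rpow_one, neg_mul]
  have hint : IntegrableOn (fun x : ℝ => x ^ 2 * Real.exp (-(t * x))) (Set.Ioi 0) := by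
    exact ((integrableOn_rpow_mul_exp_neg_mul_rpow (by norm_num : (-1:ℝ) < 2) one_pos
      ht)).congr_fun heq measurableSet_Ioi
  have hnn : (0 : ℝ → ℝ) ≤ᵐ[Measure.restrict volume (Set.Ioi 0)]
      fun x => x ^ 2 * Real.exp (-(t * x)) :=
    ae_of_all _ fun x => mul_nonneg (sq_nonneg x) (exp_pos _).le
  rw [← ofReal_integral_eq_lintegral_ofReal hint hnn]
  congr 1
  have h := Real.integral_rpow_mul_exp_neg_mul_Ioi (a := 3) (by norm_num) ht
  have h2 : ∫ x : ℝ in Set.Ioi 0, x ^ 2 * Real.exp (-(t * x))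
      = (1 / t) ^ (3 : ℝ) * Real.Gamma 3 := by
    rw [← h]
    refine setIntegral_congr_fun measurableSet_Ioi fun x _ => ?_
    norm_num
  rw [h2, show (3:ℝ) = ((3:ℕ):ℝ) by norm_num, Real.rpow_natCast,
    show ((3:ℕ) : ℝ) = (2:ℕ) + 1 by norm_num, Real.Gamma_nat_eq_factorial]
  have ht3 : (0:ℝ) < t ^ 3 := by positivity
  norm_num [Nat.factorial]
  try field_simp
  try ring

/-- Upper bound: `g t ≤ 4 (t+t³)⁻¹`. -/
lemma levyG_upper {t : ℝ} (ht : 0 < t) :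
    levyG t ≤ ENNReal.ofReal 4 * ENNReal.ofReal ((t + t ^ 3)⁻¹) := by
  rw [← ENNReal.ofReal_mul (by norm_num)]
  have hsum : 0 < t + t ^ 3 := by positivity
  rcases le_total t 1 with h1 | h1
  · have hle : levyG t ≤ ENNReal.ofReal t⁻¹ := by
      rw [← lint_exp ht]
      refine lintegral_mono fun x => ENNReal.ofReal_le_ofReal ?_
      calc min (x ^ 2) 1 * Real.exp (-(t * x)) ≤ 1 * Real.exp (-(t * x)) :=
            mul_le_mul_of_nonneg_right (min_le_right _ _) (exp_pos _).le
        _ = Real.exp (-(t * x)) := one_mul _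
    refine hle.trans (ENNReal.ofReal_le_ofReal ?_)
    have ht2 : t ^ 2 ≤ 1 := by nlinarith
    have hts : t + t ^ 3 ≤ 2 * t := by nlinarith [mul_le_mul_of_nonneg_left ht2 ht.le]
    have key : t⁻¹ * (t + t ^ 3) ≤ 2 := by
      rw [inv_mul_le_iff₀ ht]; linarith
    calc t⁻¹ = t⁻¹ * (t + t ^ 3) * (t + t ^ 3)⁻¹ := by field_simp
      _ ≤ 2 * (t + t ^ 3)⁻¹ := mul_le_mul_of_nonneg_right key (inv_nonneg.2 hsum.le)
      _ ≤ 4 * (t + t ^ 3)⁻¹ := by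
          have := inv_nonneg.2 hsum.le
          nlinarith
  · have hle : levyG t ≤ ENNReal.ofReal (2 / t ^ 3) := by
      rw [← lint_sq_exp ht]
      refine lintegral_mono fun x => ENNReal.ofReal_le_ofReal ?_
      exact mul_le_mul_of_nonneg_right (min_le_left _ _) (exp_pos _).le
    refine hle.trans (ENNReal.ofReal_le_ofReal ?_)
    have htt : t ≤ t ^ 3 := by nlinarith [mul_nonneg (mul_nonneg ht.le (sub_nonneg.2 h1)) (by linarith : (0:ℝ) ≤ t + 1)]
    have hts : t + t ^ 3 ≤ 2 * t ^ 3 := by linarith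
    have ht3 : (0:ℝ) < t ^ 3 := by positivity
    have key : (2 / t ^ 3) * (t + t ^ 3) ≤ 4 := by
      rw [div_mul_eq_mul_div, div_le_iff₀ ht3]; nlinarith
    calc 2 / t ^ 3 = (2 / t ^ 3) * (t + t ^ 3) * (t + t ^ 3)⁻¹ := by field_simp
      _ ≤ 4 * (t + t ^ 3)⁻¹ := mul_le_mul_of_nonneg_right key (inv_nonneg.2 hsum.le)

lemma lt_top_of_le_mul {c X Y : ENNReal} (hc : c ≠ 0) (h : c * X ≤ Y) (hY : Y < ⊤) :
    X < ⊤ := by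
  by_contra hX
  rw [not_lt, top_le_iff] at hX
  rw [hX, ENNReal.mul_top hc] at h
  exact hY.ne (top_le_iff.mp h)

/-- Lower bound: `(16e)⁻¹ (t+t³)⁻¹ ≤ g t`. -/
lemma levyG_lower {t : ℝ} (ht : 0 < t) :
    ENNReal.ofReal ((16 * Real.exp 1)⁻¹) * ENNReal.ofReal ((t + t ^ 3)⁻¹) ≤ levyG t := by
  rw [← ENNReal.ofReal_mul (by positivity)]
  have hsum : 0 < t + t ^ 3 := by positivity
  have he : (0:ℝ) < Real.exp 1 := exp_pos 1
  rcases le_total t 1 with h1 | h1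
  · -- use interval (1, 1 + 1/t]
    have hsub : Set.Ioc (1:ℝ) (1 + t⁻¹) ⊆ Set.Ioi 0 := fun x hx => lt_trans one_pos hx.1
    have hstep : ∫⁻ x in Set.Ioc (1:ℝ) (1 + t⁻¹), ENNReal.ofReal (Real.exp (-2))
        ≤ levyG t := by
      refine le_trans ?_ (lintegral_mono_set hsub)
      refine lintegral_mono_ae ((ae_restrict_iff' measurableSet_Ioc).2
        (ae_of_all _ fun x hx => ?_))
      refine ENNReal.ofReal_le_ofReal ?_
      have hx1 : (1:ℝ) ≤ x := hx.1.le
      have hmin : min (x ^ 2) 1 = 1 := min_eq_right (by nlinarith)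
      rw [hmin, one_mul]
      apply Real.exp_le_exp.2
      have : t * x ≤ t * (1 + t⁻¹) := by
        apply mul_le_mul_of_nonneg_left hx.2 ht.le
      have h2 : t * (1 + t⁻¹) = t + 1 := by field_simp
      linarith
    rw [setLIntegral_const, Real.volume_Ioc, show (1 + t⁻¹ - 1 : ℝ) = t⁻¹ by ring,
      ← ENNReal.ofReal_mul (exp_pos _).le] at hstep
    refine le_trans (ENNReal.ofReal_le_ofReal ?_) hstep
    have hinv : (t + t ^ 3)⁻¹ ≤ t⁻¹ := inv_anti₀ ht (by nlinarith [pow_pos ht 3])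
    have hc : ((16 : ℝ) * Real.exp 1)⁻¹ ≤ Real.exp (-2) := by
      rw [show (-2:ℝ) = -(1+1) by norm_num, Real.exp_neg, Real.exp_add]
      apply inv_anti₀ (by positivity)
      nlinarith [Real.exp_one_lt_d9]
    exact mul_le_mul hc hinv (by positivity) (exp_pos _).le
  · -- use interval (1/(2t), 1/t]
    have hsub : Set.Ioc (t⁻¹/2) t⁻¹ ⊆ Set.Ioi 0 := fun x hx => lt_trans (by positivity) hx.1
    have hstep : ∫⁻ x in Set.Ioc (t⁻¹/2) t⁻¹,
        ENNReal.ofReal ((t⁻¹/2) ^ 2 * Real.exp (-1)) ≤ levyG t := by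
      refine le_trans ?_ (lintegral_mono_set hsub)
      refine lintegral_mono_ae ((ae_restrict_iff' measurableSet_Ioc).2
        (ae_of_all _ fun x hx => ?_))
      refine ENNReal.ofReal_le_ofReal ?_
      have hxpos : 0 < x := lt_trans (by positivity) hx.1
      have hx2 : x ≤ t⁻¹ := hx.2
      have hxle1 : x ≤ 1 := le_trans hx2 (by
        rw [inv_le_one_iff₀]; right; exact h1)
      have hmin : min (x ^ 2) 1 = x ^ 2 := min_eq_left (by nlinarith)
      rw [hmin]
      apply mul_le_mul
      · nlinarith [hx.1.le]
      · apply Real.exp_le_exp.2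
        have : t * x ≤ t * t⁻¹ := mul_le_mul_of_nonneg_left hx2 ht.le
        rw [mul_inv_cancel₀ ht.ne'] at this
        linarith
      · exact (exp_pos _).le
      · positivity
    rw [setLIntegral_const, Real.volume_Ioc,
      ← ENNReal.ofReal_mul (by positivity)] at hstep
    refine le_trans (ENNReal.ofReal_le_ofReal ?_) hstep
    have hinv : (t + t ^ 3)⁻¹ ≤ (t ^ 3)⁻¹ :=
      inv_anti₀ (by positivity) (by nlinarith)
    have heq : (t⁻¹/2) ^ 2 * Real.exp (-1) * (t⁻¹ - t⁻¹/2)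
        = (8 * Real.exp 1)⁻¹ * (t ^ 3)⁻¹ := by
      rw [Real.exp_neg]
      field_simp
      ring
    rw [heq]
    apply mul_le_mul ?_ hinv (by positivity) (by positivity)
    exact inv_anti₀ (by positivity) (by nlinarith [he])

/-- The Laplace transform `f₊` of a nonnegative measure `𝒢` on `(0,∞)` is a Lévy
density iff `∫ (t + t³)⁻¹ 𝒢(dt) < ∞`. -/
theorem stmt_4 (𝒢 : Measure ℝ) [SigmaFinite 𝒢] (h0 : 𝒢 (Set.Iic 0) = 0) :
    (∫⁻ x in Set.Ioi (0 : ℝ),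
        ENNReal.ofReal (min (x ^ 2) 1) *
          (∫⁻ t, ENNReal.ofReal (Real.exp (-(t * x))) ∂𝒢) < ⊤)
      ↔ (∫⁻ t, ENNReal.ofReal ((t + t ^ 3)⁻¹) ∂𝒢 < ⊤) := by
  have hG : ∀ h : ℝ → ENNReal, ∫⁻ t, h t ∂𝒢 = ∫⁻ t in Set.Ioi 0, h t ∂𝒢 := by
    intro h
    rw [← lintegral_add_compl h (measurableSet_Ioi : MeasurableSet (Set.Ioi (0:ℝ))),
      compl_Ioi, setLIntegral_measure_zero _ _ h0, add_zero]
  have hswap :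
      (∫⁻ x in Set.Ioi (0:ℝ), ENNReal.ofReal (min (x ^ 2) 1) *
          ∫⁻ t, ENNReal.ofReal (Real.exp (-(t * x))) ∂𝒢)
        = ∫⁻ t, levyG t ∂𝒢 := by
    have hcont : Continuous fun p : ℝ × ℝ =>
        ENNReal.ofReal (min (p.1 ^ 2) 1 * Real.exp (-(p.2 * p.1))) := by
      apply ENNReal.continuous_ofReal.comp
      apply Continuous.mul
      · exact ((continuous_fst.pow 2).min continuous_const)
      · exact Real.continuous_exp.comp (continuous_snd.mul continuous_fst).neg
    have hmeas : AEMeasurable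
        (Function.uncurry fun x t : ℝ =>
          ENNReal.ofReal (min (x ^ 2) 1 * Real.exp (-(t * x))))
        ((volume.restrict (Set.Ioi 0)).prod 𝒢) := hcont.aemeasurable
    calc (∫⁻ x in Set.Ioi (0:ℝ), ENNReal.ofReal (min (x ^ 2) 1) *
          ∫⁻ t, ENNReal.ofReal (Real.exp (-(t * x))) ∂𝒢)
        = ∫⁻ x in Set.Ioi (0:ℝ),
            ∫⁻ t, ENNReal.ofReal (min (x ^ 2) 1 * Real.exp (-(t * x))) ∂𝒢 := by
          refine lintegral_congr fun x => ?_
          rw [← lintegral_const_mul' _ _ ENNReal.ofReal_ne_top]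
          exact lintegral_congr fun t => (ENNReal.ofReal_mul (min_sq_nonneg x)).symm
      _ = ∫⁻ t, levyG t ∂𝒢 := lintegral_lintegral_swap hmeas
  rw [hswap, hG (fun t => levyG t), hG (fun t => ENNReal.ofReal ((t + t ^ 3)⁻¹))]
  have hc1 : ENNReal.ofReal ((16 * Real.exp 1)⁻¹) ≠ 0 :=
    (ENNReal.ofReal_pos.2 (by positivity)).ne'
  constructor
  · intro hfin
    have hmono : ∫⁻ t in Set.Ioi (0:ℝ),
        ENNReal.ofReal ((16 * Real.exp 1)⁻¹) * ENNReal.ofReal ((t + t ^ 3)⁻¹) ∂𝒢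
          ≤ ∫⁻ t in Set.Ioi (0:ℝ), levyG t ∂𝒢 :=
      lintegral_mono_ae ((ae_restrict_iff' measurableSet_Ioi).2
        (ae_of_all _ fun t ht => levyG_lower ht))
    rw [lintegral_const_mul' _ _ ENNReal.ofReal_ne_top] at hmono
    exact lt_top_of_le_mul hc1 hmono hfin
  · intro hfin
    have hmono : ∫⁻ t in Set.Ioi (0:ℝ), levyG t ∂𝒢
        ≤ ∫⁻ t in Set.Ioi (0:ℝ),
            ENNReal.ofReal 4 * ENNReal.ofReal ((t + t ^ 3)⁻¹) ∂𝒢 :=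
      lintegral_mono_ae ((ae_restrict_iff' measurableSet_Ioi).2
        (ae_of_all _ fun t ht => levyG_upper ht))
    rw [lintegral_const_mul' _ _ ENNReal.ofReal_ne_top] at hmono
    exact lt_of_le_of_lt hmono (ENNReal.mul_lt_top ENNReal.ofReal_lt_top hfin)
end

section
/- Let 𝒢 be a nonnegative measure on (0, +∞) with ∫_{(0,∞)} (t + t³)^{-1} 𝒢(dt) < ∞. Then f₊(x) = ∫_{(0,∞)} e^{-tx} 𝒢(dt) defines a Lévy density of finite variation type, i.e., ∫₀^∞ min(x, 1) f₊(x) dx < ∞, if and only if ∫_{(0,∞)} (t + t²)^{-1} 𝒢(dt) < ∞. -/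
open MeasureTheory Real Set

namespace Stmt5Aux

noncomputable def F (t : ℝ) : ENNReal :=
  ∫⁻ x in Ioi (0:ℝ), ENNReal.ofReal (min x 1 * Real.exp (-(t * x)))

lemma lintegral_exp (t : ℝ) (ht : 0 < t) :
    ∫⁻ x in Ioi (0:ℝ), ENNReal.ofReal (Real.exp (-(t * x))) = ENNReal.ofReal t⁻¹ := by
  have hint : IntegrableOn (fun x => Real.exp (-(t * x))) (Ioi (0:ℝ)) := by
    simpa [neg_mul] using exp_neg_integrableOn_Ioi 0 ht
  rw [← ofReal_integral_eq_lintegral_ofReal hint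
    (Filter.Eventually.of_forall fun x => (Real.exp_pos _).le)]
  congr 1
  have := integral_comp_mul_left_Ioi (fun x => Real.exp (-x)) 0 ht
  simp only [mul_zero] at this
  calc ∫ x in Ioi (0:ℝ), Real.exp (-(t*x)) = t⁻¹ • ∫ x in Ioi (0:ℝ), Real.exp (-x) := this
    _ = t⁻¹ := by rw [integral_exp_neg_Ioi_zero]; simp

lemma F_upper {t : ℝ} (ht : 0 < t) :
    F t ≤ ENNReal.ofReal (8 * (t + t^2)⁻¹) := by
  have hden : 0 < t + t^2 := by positivity
  rcases le_total t 1 with h1 | h1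
  · calc F t ≤ ∫⁻ x in Ioi (0:ℝ), ENNReal.ofReal (Real.exp (-(t * x))) := by
          apply lintegral_mono fun x => ?_
          apply ENNReal.ofReal_le_ofReal
          calc min x 1 * Real.exp (-(t*x)) ≤ 1 * Real.exp (-(t*x)) :=
                mul_le_mul_of_nonneg_right (min_le_right _ _) (Real.exp_pos _).le
            _ = _ := one_mul _
      _ = ENNReal.ofReal t⁻¹ := lintegral_exp t ht
      _ ≤ ENNReal.ofReal (8 * (t + t^2)⁻¹) := by
          apply ENNReal.ofReal_le_ofReal
          have : (1:ℝ)/t ≤ 8/(t+t^2) := by rw [div_le_div_iff₀ ht hden]; nlinarith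
          simpa [one_div, div_eq_mul_inv] using this
  · have key : ∀ x : ℝ, min x 1 * Real.exp (-(t*x)) ≤ (2/t) * Real.exp (-(t/2*x)) := by
      intro x
      rcases le_or_gt x 0 with hx | hx
      · have : min x 1 * Real.exp (-(t*x)) ≤ 0 :=
          mul_nonpos_of_nonpos_of_nonneg (le_trans (min_le_left _ _) hx) (Real.exp_pos _).le
        exact this.trans (by positivity)
      · have h2 : x * Real.exp (-(t/2*x)) ≤ 2/t := by
          rw [Real.exp_neg, mul_inv_le_iff₀' (Real.exp_pos _), mul_comm, div_mul_eq_mul_div,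
            le_div_iff₀ ht]
          nlinarith [Real.add_one_le_exp (t/2*x), Real.exp_pos (t/2*x), hx.le]
        have hsplit : Real.exp (-(t*x)) = Real.exp (-(t/2*x)) * Real.exp (-(t/2*x)) := by
          rw [← Real.exp_add]; ring_nf
        calc min x 1 * Real.exp (-(t*x)) ≤ x * Real.exp (-(t*x)) :=
              mul_le_mul_of_nonneg_right (min_le_left _ _) (Real.exp_pos _).le
          _ = (x * Real.exp (-(t/2*x))) * Real.exp (-(t/2*x)) := by rw [hsplit]; ring
          _ ≤ (2/t) * Real.exp (-(t/2*x)) :=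
              mul_le_mul_of_nonneg_right h2 (Real.exp_pos _).le
    calc F t ≤ ∫⁻ x in Ioi (0:ℝ), ENNReal.ofReal ((2/t) * Real.exp (-(t/2*x))) :=
          lintegral_mono fun x => ENNReal.ofReal_le_ofReal (key x)
      _ = ENNReal.ofReal (2/t) * ∫⁻ x in Ioi (0:ℝ), ENNReal.ofReal (Real.exp (-(t/2*x))) := by
          simp_rw [ENNReal.ofReal_mul (by positivity : (0:ℝ) ≤ 2/t)]
          exact lintegral_const_mul' _ _ ENNReal.ofReal_ne_top
      _ = ENNReal.ofReal (2/t) * ENNReal.ofReal (t/2)⁻¹ := by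
          rw [lintegral_exp (t/2) (by linarith)]
      _ ≤ ENNReal.ofReal (8 * (t + t^2)⁻¹) := by
          rw [← ENNReal.ofReal_mul (by positivity)]
          apply ENNReal.ofReal_le_ofReal
          have h4 : (2/t) * (t/2)⁻¹ = 4/(t*t) := by field_simp; ring
          rw [h4, show (8:ℝ)*(t+t^2)⁻¹ = 8/(t+t^2) from (div_eq_mul_inv _ _).symm,
            div_le_div_iff₀ (by nlinarith) hden]
          nlinarith

lemma F_lower {t : ℝ} (ht : 0 < t) :
    ENNReal.ofReal (Real.exp (-1)/4 * (t + t^2)⁻¹) ≤ F t := by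
  have hden : 0 < t + t^2 := by positivity
  have hE := Real.exp_pos (-1)
  rcases le_total t (1/2) with h1 | h1
  · -- small t : use x ∈ Ioc 1 t⁻¹
    have hinv : (2:ℝ) ≤ t⁻¹ := by
      rw [show (2:ℝ) = (1/2)⁻¹ by norm_num]
      exact inv_anti₀ ht h1
    have hsub : Ioc (1:ℝ) t⁻¹ ⊆ Ioi 0 := fun x hx => lt_trans one_pos hx.1
    have step1 : ∫⁻ x in Ioc (1:ℝ) t⁻¹, ENNReal.ofReal (Real.exp (-1)) ≤ F t := by
      refine le_trans ?_ (lintegral_mono_set hsub)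
      apply lintegral_mono_ae
      rw [ae_restrict_iff' measurableSet_Ioc]
      refine Filter.Eventually.of_forall fun x hx => ENNReal.ofReal_le_ofReal ?_
      have hx1 : (1:ℝ) ≤ x := hx.1.le
      have hmin : min x 1 = 1 := min_eq_right hx1
      have hxt : t * x ≤ 1 := by
        calc t * x ≤ t * t⁻¹ := mul_le_mul_of_nonneg_left hx.2 ht.le
          _ = 1 := mul_inv_cancel₀ ht.ne'
      rw [hmin, one_mul]
      exact Real.exp_le_exp.2 (by linarith)
    rw [lintegral_const, Measure.restrict_apply_univ, Real.volume_Ioc] at step1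
    refine le_trans ?_ step1
    rw [← ENNReal.ofReal_mul hE.le]
    apply ENNReal.ofReal_le_ofReal
    have hA : (t + t^2)⁻¹ ≤ t⁻¹ := inv_anti₀ ht (by nlinarith)
    have hu : (0:ℝ) ≤ (t + t^2)⁻¹ := by positivity
    nlinarith
  · -- large t : use x ∈ Ioc 0 m, m = min 1 t⁻¹
    set m : ℝ := min 1 t⁻¹ with hm
    have hm0 : 0 < m := lt_min one_pos (inv_pos.2 ht)
    have hsub : Ioc (0:ℝ) m ⊆ Ioi 0 := fun x hx => hx.1
    have step1 : ∫⁻ x in Ioc (0:ℝ) m, ENNReal.ofReal (Real.exp (-1) * x) ≤ F t := by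
      refine le_trans ?_ (lintegral_mono_set hsub)
      apply lintegral_mono_ae
      rw [ae_restrict_iff' measurableSet_Ioc]
      refine Filter.Eventually.of_forall fun x hx => ENNReal.ofReal_le_ofReal ?_
      have hx1 : x ≤ 1 := hx.2.trans (min_le_left _ _)
      have hmin : min x 1 = x := min_eq_left hx1
      have hxt : t * x ≤ 1 := by
        calc t * x ≤ t * t⁻¹ := mul_le_mul_of_nonneg_left (hx.2.trans (min_le_right _ _)) ht.le
          _ = 1 := mul_inv_cancel₀ ht.ne'
      rw [hmin, mul_comm]
      exact mul_le_mul_of_nonneg_left (Real.exp_le_exp.2 (by linarith)) hx.1.le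
    have step2 : ∫⁻ x in Ioc (0:ℝ) m, ENNReal.ofReal (Real.exp (-1) * x)
        = ENNReal.ofReal (Real.exp (-1) * (m^2/2)) := by
      have hi : IntegrableOn (fun x : ℝ => Real.exp (-1) * x) (Ioc 0 m) :=
        (continuous_const.mul continuous_id).integrableOn_Ioc
      rw [← ofReal_integral_eq_lintegral_ofReal hi
        ((ae_restrict_iff' measurableSet_Ioc).2 (Filter.Eventually.of_forall fun x hx =>
          mul_nonneg (Real.exp_pos _).le hx.1.le))]
      congr 1
      rw [← intervalIntegral.integral_of_le hm0.le, intervalIntegral.integral_const_mul,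
        integral_id]
      ring
    rw [step2] at step1
    refine le_trans ?_ step1
    apply ENNReal.ofReal_le_ofReal
    rcases le_total t 1 with h2 | h2
    · have hm1 : m = 1 := min_eq_left ((one_le_inv_iff₀.2 ⟨ht, h2⟩))
      have hB : (t + t^2)⁻¹ ≤ 2 := by
        rw [show (2:ℝ) = (1/2)⁻¹ by norm_num]
        exact inv_anti₀ (by norm_num) (by nlinarith)
      rw [hm1]
      nlinarith [inv_nonneg.2 hden.le]
    · have hm1 : m = t⁻¹ := min_eq_right (inv_le_one_of_one_le₀ h2)
      have hB : (t + t^2)⁻¹ ≤ (t^2)⁻¹ := inv_anti₀ (by positivity) (by nlinarith)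
      rw [hm1]
      have h3 : (t⁻¹)^2 = (t^2)⁻¹ := by rw [inv_pow]
      nlinarith [inv_nonneg.2 (by positivity : (0:ℝ) ≤ t^2)]

end Stmt5Aux

/-- Given `∫ (t + t³)⁻¹ 𝒢(dt) < ∞`, the Laplace transform `f₊` of `𝒢` is a Lévy
density of finite variation type iff `∫ (t + t²)⁻¹ 𝒢(dt) < ∞`. -/
theorem stmt_5 (𝒢 : Measure ℝ) [SigmaFinite 𝒢] (h0 : 𝒢 (Set.Iic 0) = 0)
    (h3 : ∫⁻ t, ENNReal.ofReal ((t + t ^ 3)⁻¹) ∂𝒢 < ⊤) :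
    (∫⁻ x in Set.Ioi (0 : ℝ),
        ENNReal.ofReal (min x 1) *
          (∫⁻ t, ENNReal.ofReal (Real.exp (-(t * x))) ∂𝒢) < ⊤)
      ↔ (∫⁻ t, ENNReal.ofReal ((t + t ^ 2)⁻¹) ∂𝒢 < ⊤) := by
  have hpos : ∀ᵐ t ∂𝒢, 0 < t := by
    rw [ae_iff]
    simp only [not_lt]; exact h0
  have hmeas : Measurable fun p : ℝ × ℝ =>
      ENNReal.ofReal (min p.1 1 * Real.exp (-(p.2 * p.1))) := by fun_prop
  have hswap : (∫⁻ x in Set.Ioi (0 : ℝ), ENNReal.ofReal (min x 1) *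
      (∫⁻ t, ENNReal.ofReal (Real.exp (-(t * x))) ∂𝒢)) = ∫⁻ t, Stmt5Aux.F t ∂𝒢 := by
    have h1 : ∀ x ∈ Ioi (0:ℝ), ENNReal.ofReal (min x 1) *
        (∫⁻ t, ENNReal.ofReal (Real.exp (-(t * x))) ∂𝒢)
        = ∫⁻ t, ENNReal.ofReal (min x 1 * Real.exp (-(t * x))) ∂𝒢 := by
      intro x hx
      have hnn : 0 ≤ min x 1 := le_min (le_of_lt hx) zero_le_one
      rw [← lintegral_const_mul' _ _ ENNReal.ofReal_ne_top]
      simp_rw [ENNReal.ofReal_mul hnn]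
    rw [setLIntegral_congr_fun measurableSet_Ioi h1]
    exact lintegral_lintegral_swap hmeas.aemeasurable
  rw [hswap]
  have hIJ : ∫⁻ t, Stmt5Aux.F t ∂𝒢 ≤ ENNReal.ofReal 8 * ∫⁻ t, ENNReal.ofReal ((t + t ^ 2)⁻¹) ∂𝒢 := by
    calc ∫⁻ t, Stmt5Aux.F t ∂𝒢
        ≤ ∫⁻ t, ENNReal.ofReal 8 * ENNReal.ofReal ((t + t ^ 2)⁻¹) ∂𝒢 := by
          apply lintegral_mono_ae
          filter_upwards [hpos] with t ht
          rw [← ENNReal.ofReal_mul (by norm_num)]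
          exact Stmt5Aux.F_upper ht
      _ = _ := lintegral_const_mul' _ _ ENNReal.ofReal_ne_top
  have hJI : ∫⁻ t, ENNReal.ofReal ((t + t ^ 2)⁻¹) ∂𝒢
      ≤ ENNReal.ofReal (4 / Real.exp (-1)) * ∫⁻ t, Stmt5Aux.F t ∂𝒢 := by
    calc ∫⁻ t, ENNReal.ofReal ((t + t ^ 2)⁻¹) ∂𝒢
        ≤ ∫⁻ t, ENNReal.ofReal (4 / Real.exp (-1)) * Stmt5Aux.F t ∂𝒢 := by
          apply lintegral_mono_ae
          filter_upwards [hpos] with t ht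
          calc ENNReal.ofReal ((t + t ^ 2)⁻¹)
              = ENNReal.ofReal (4 / Real.exp (-1)) *
                ENNReal.ofReal (Real.exp (-1)/4 * (t + t ^ 2)⁻¹) := by
                rw [← ENNReal.ofReal_mul (by positivity)]
                congr 1
                field_simp
            _ ≤ _ := mul_le_mul_right (Stmt5Aux.F_lower ht) _
      _ = _ := lintegral_const_mul' _ _ ENNReal.ofReal_ne_top
  constructor
  · intro h
    exact lt_of_le_of_lt hJI (ENNReal.mul_lt_top ENNReal.ofReal_lt_top h)
  · intro h
    exact lt_of_le_of_lt hIJ (ENNReal.mul_lt_top ENNReal.ofReal_lt_top h)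
end

section
/- Let ν ∈ (0, 2), and let ψ: ℝ → ℂ satisfy ψ(ξ) = c_± |ξ|^ν + O(|ξ|^{ν-δ}) as ξ → ±∞, where δ > 0, c_± = c e^{±iφ} with c > 0 and φ ∈ (-π/2, π/2). Set ν_± = ν/2 ∓ φ/π. Then ψ_norm(ξ) := c^{-1}(1 - iξ)^{-ν₊}(1 + iξ)^{-ν₋} ψ(ξ) = 1 + O(|ξ|^{-δ'}) as ξ → ±∞ for some δ' > 0 (one may take δ' = min(δ,1)). -/
open Complex Real Filter Asymptotics

private lemma my_arctan_le_self {x : ℝ} (hx : 0 ≤ x) : Real.arctan x ≤ x := by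
  have h0 : 0 ≤ Real.arctan x := by
    have := Real.arctan_strictMono.monotone hx
    rwa [Real.arctan_zero] at this
  have h := Real.le_tan h0 (Real.arctan_lt_pi_div_two x)
  rwa [Real.tan_arctan] at h

private lemma key_atTop (ν δ c φ : ℝ) (hν : 0 < ν) (hδ : 0 < δ) (hc : 0 < c)
    (ψ : ℝ → ℂ)
    (hp : (fun ξ : ℝ => ψ ξ - (c : ℂ) * Complex.exp (Complex.I * φ) * (|ξ| : ℝ) ^ (ν : ℂ))
        =O[atTop] fun ξ : ℝ => |ξ| ^ (ν - δ)) :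
    (fun ξ : ℝ => (c : ℂ)⁻¹ * (1 - Complex.I * ξ) ^ (-(((ν / 2 - φ / π) : ℝ) : ℂ))
            * (1 + Complex.I * ξ) ^ (-(((ν / 2 + φ / π) : ℝ) : ℂ)) * ψ ξ - 1)
          =O[atTop] fun ξ : ℝ => |ξ| ^ (-(min δ 1)) := by
  obtain ⟨C, hC0, hCw⟩ := hp.exists_pos
  have hC := hCw.bound
  set K : ℝ := ν / 2 + 2 * |φ| / π with hKdef
  have hπ : (0:ℝ) < π := Real.pi_pos
  have hK0 : 0 ≤ K := by positivity
  rw [isBigO_iff]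
  refine ⟨c⁻¹ * C + 2 * K, ?_⟩
  filter_upwards [hC, eventually_ge_atTop (1 : ℝ), eventually_ge_atTop K] with ξ hCξ hξ1 hξK
  have hξ0 : (0:ℝ) < ξ := lt_of_lt_of_le one_pos hξ1
  have habs : |ξ| = ξ := abs_of_pos hξ0
  have hne : (1 + Complex.I * (ξ:ℂ)) ≠ 0 := by
    intro h
    have := congrArg Complex.re h
    simp at this
  have hconj : (1 - Complex.I * (ξ:ℂ)) = (starRingEnd ℂ) (1 + Complex.I * ξ) := by
    apply Complex.ext <;> simp
  have hargne : (1 + Complex.I * (ξ:ℂ)).arg ≠ π := by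
    rw [ne_eq, Complex.arg_eq_pi_iff]
    simp
  have harg : (1 + Complex.I * (ξ:ℂ)).arg = Real.arctan ξ := by
    have h1 : Real.tan ((1 + Complex.I * (ξ:ℂ)).arg) = ξ := by
      rw [Complex.tan_arg]; simp
    have h2 : -(π/2) < (1 + Complex.I * (ξ:ℂ)).arg := by
      rw [Complex.neg_pi_div_two_lt_arg_iff]; left; simp
    have h3 : (1 + Complex.I * (ξ:ℂ)).arg < π/2 := by
      rw [Complex.arg_lt_pi_div_two_iff]; left; simp
    conv_rhs => rw [← h1]
    exact (Real.arctan_tan h2 h3).symm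
  have habs2 : ‖(1 + Complex.I * (ξ:ℂ))‖ = Real.sqrt (1 + ξ^2) := by
    rw [Complex.norm_def]
    congr 1
    rw [Complex.normSq_apply]
    simp
    ring
  set r : ℝ := Real.log (1 + ξ^2) / 2 with hrdef
  set t : ℝ := Real.arctan ξ with htdef
  have hlog : Complex.log (1 + Complex.I * (ξ:ℂ)) = (r : ℂ) + (t : ℂ) * Complex.I := by
    apply Complex.ext
    · rw [Complex.log_re, habs2, Real.log_sqrt (by positivity)]
      simp [hrdef]
    · rw [Complex.log_im, harg]
      simp
  have hw : (1 - Complex.I * (ξ:ℂ)) ^ (-(((ν / 2 - φ / π) : ℝ) : ℂ)) *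
      (1 + Complex.I * (ξ:ℂ)) ^ (-(((ν / 2 + φ / π) : ℝ) : ℂ)) =
      Complex.exp ((↑(-(ν * r)) : ℂ) + (↑(-(2 * φ / π * t)) : ℂ) * Complex.I) := by
    have hconjne : (starRingEnd ℂ) (1 + Complex.I * (ξ:ℂ)) ≠ 0 := by
      intro h
      apply hne
      have h' := congrArg (starRingEnd ℂ) h
      simpa using h'
    rw [hconj, Complex.cpow_def_of_ne_zero hconjne,
      Complex.cpow_def_of_ne_zero hne, Complex.log_conj _ hargne, ← Complex.exp_add, hlog]
    congr 1
    rw [map_add, map_mul, Complex.conj_ofReal, Complex.conj_ofReal, Complex.conj_I]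
    push_cast
    ring
  have hcne : (c:ℂ) ≠ 0 := by exact_mod_cast hc.ne'
  have hM : ((|ξ| : ℝ) : ℂ) ^ (ν : ℂ) = Complex.exp (↑(ν * Real.log ξ) : ℂ) := by
    rw [habs, Complex.cpow_def_of_ne_zero (by exact_mod_cast hξ0.ne'),
      ← Complex.ofReal_log hξ0.le]
    congr 1
    push_cast
    ring
  set A : ℝ := ν * Real.log ξ - ν * r with hAdef
  set B : ℝ := φ - 2 * φ / π * t with hBdef
  have key1 : (c:ℂ)⁻¹ * (1 - Complex.I * (ξ:ℂ)) ^ (-(((ν / 2 - φ / π) : ℝ) : ℂ))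
      * (1 + Complex.I * (ξ:ℂ)) ^ (-(((ν / 2 + φ / π) : ℝ) : ℂ))
      * ((c : ℂ) * Complex.exp (Complex.I * φ) * (|ξ| : ℝ) ^ (ν : ℂ))
      = Complex.exp ((A:ℂ) + (B:ℂ) * Complex.I) := by
    have : (c:ℂ)⁻¹ * (1 - Complex.I * (ξ:ℂ)) ^ (-(((ν / 2 - φ / π) : ℝ) : ℂ))
        * (1 + Complex.I * (ξ:ℂ)) ^ (-(((ν / 2 + φ / π) : ℝ) : ℂ))
        * ((c : ℂ) * Complex.exp (Complex.I * φ) * (|ξ| : ℝ) ^ (ν : ℂ))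
        = ((c:ℂ)⁻¹ * c) * (((1 - Complex.I * (ξ:ℂ)) ^ (-(((ν / 2 - φ / π) : ℝ) : ℂ)) *
          (1 + Complex.I * (ξ:ℂ)) ^ (-(((ν / 2 + φ / π) : ℝ) : ℂ))) *
          (Complex.exp (Complex.I * φ) * (((|ξ| : ℝ) : ℂ) ^ (ν : ℂ)))) := by ring
    rw [this, inv_mul_cancel₀ hcne, one_mul, hw, hM, ← Complex.exp_add, ← Complex.exp_add]
    congr 1
    rw [hAdef, hBdef]
    push_cast
    ring
  -- bounds
  have hlogsq : Real.log (ξ^2) = 2 * Real.log ξ := by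
    rw [Real.log_pow]; push_cast; ring
  have hAeq : A = -(ν/2) * Real.log (1 + (ξ^2)⁻¹) := by
    have he : Real.log (1 + (ξ^2)⁻¹) = Real.log (1+ξ^2) - Real.log (ξ^2) := by
      rw [← Real.log_div (by positivity) (by positivity)]
      congr 1
      field_simp
      ring
    rw [he, hlogsq, hAdef, hrdef]
    ring
  have hinv1 : ξ⁻¹ ≤ 1 := inv_le_one_of_one_le₀ hξ1
  have hinvsq : (ξ^2)⁻¹ ≤ ξ⁻¹ := by
    rw [sq, mul_inv]
    calc ξ⁻¹ * ξ⁻¹ ≤ 1 * ξ⁻¹ := mul_le_mul_of_nonneg_right hinv1 (inv_nonneg.mpr hξ0.le)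
      _ = ξ⁻¹ := one_mul _
  have hL0 : 0 ≤ Real.log (1 + (ξ^2)⁻¹) := Real.log_nonneg (by
    have : (0:ℝ) ≤ (ξ^2)⁻¹ := by positivity
    linarith)
  have hLup : Real.log (1 + (ξ^2)⁻¹) ≤ ξ⁻¹ := by
    have := Real.log_le_sub_one_of_pos (x := 1 + (ξ^2)⁻¹) (by positivity)
    linarith
  have hA : |A| ≤ ν/2 * ξ⁻¹ := by
    rw [hAeq, abs_mul, abs_neg, _root_.abs_of_pos (by linarith : (0:ℝ) < ν/2),
      _root_.abs_of_nonneg hL0]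
    exact mul_le_mul_of_nonneg_left hLup (by linarith)
  have hBeq : B = 2 * φ / π * Real.arctan ξ⁻¹ := by
    rw [Real.arctan_inv_of_pos hξ0, hBdef, htdef]
    field_simp
  have ht0 : 0 ≤ Real.arctan ξ⁻¹ := by
    have := Real.arctan_strictMono.monotone (inv_nonneg.mpr hξ0.le)
    rwa [Real.arctan_zero] at this
  have ht1 : Real.arctan ξ⁻¹ ≤ ξ⁻¹ := my_arctan_le_self (inv_nonneg.mpr hξ0.le)
  have hB : |B| ≤ 2 * |φ| / π * ξ⁻¹ := by
    rw [hBeq, abs_mul, _root_.abs_of_nonneg ht0]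
    have h1 : |2 * φ / π| = 2 * |φ| / π := by
      rw [abs_div, abs_mul, abs_of_pos hπ]
      norm_num
    rw [h1]
    exact mul_le_mul_of_nonneg_left ht1 (by positivity)
  have hz : ‖((A:ℂ) + (B:ℂ) * Complex.I)‖ ≤ K * ξ⁻¹ := by
    refine le_trans (Complex.norm_le_abs_re_add_abs_im _) ?_
    have hre : ((A:ℂ) + (B:ℂ) * Complex.I).re = A := by simp
    have him : ((A:ℂ) + (B:ℂ) * Complex.I).im = B := by simp
    rw [hre, him]
    refine le_trans (add_le_add hA hB) (le_of_eq ?_)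
    rw [hKdef]
    ring
  have hz1 : ‖((A:ℂ) + (B:ℂ) * Complex.I)‖ ≤ 1 := by
    refine hz.trans ?_
    rw [← mul_inv_cancel₀ hξ0.ne']
    exact mul_le_mul_of_nonneg_right hξK (inv_nonneg.mpr hξ0.le)
  have hexp : ‖(Complex.exp ((A:ℂ) + (B:ℂ) * Complex.I) - 1)‖ ≤ 2 * K * ξ⁻¹ := by
    refine (Complex.norm_exp_sub_one_le hz1).trans ?_
    linarith
  have hwabs : ‖(Complex.exp ((↑(-(ν * r)) : ℂ) + (↑(-(2 * φ / π * t)) : ℂ) * Complex.I))‖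
      ≤ ξ ^ (-ν) := by
    rw [Complex.norm_exp]
    have hre : ((↑(-(ν * r)) : ℂ) + (↑(-(2 * φ / π * t)) : ℂ) * Complex.I).re = -(ν * r) := by simp
    rw [hre, Real.rpow_def_of_pos hξ0]
    apply Real.exp_le_exp.mpr
    have hle : Real.log (ξ^2) ≤ Real.log (1+ξ^2) := Real.log_le_log (by positivity) (by linarith)
    rw [hlogsq] at hle
    rw [hrdef]
    have h5 := mul_le_mul_of_nonneg_left hle hν.le
    linarith
  -- assemble
  set X := (1 - Complex.I * (ξ:ℂ)) ^ (-(((ν / 2 - φ / π) : ℝ) : ℂ)) with hX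
  set Y := (1 + Complex.I * (ξ:ℂ)) ^ (-(((ν / 2 + φ / π) : ℝ) : ℂ)) with hY
  set M := (c : ℂ) * Complex.exp (Complex.I * φ) * ((|ξ| : ℝ) : ℂ) ^ (ν : ℂ) with hMdef
  have hsplit : (c:ℂ)⁻¹ * X * Y * ψ ξ - 1
      = (c:ℂ)⁻¹ * (Complex.exp ((↑(-(ν * r)) : ℂ) + (↑(-(2 * φ / π * t)) : ℂ) * Complex.I) * (ψ ξ - M))
        + (Complex.exp ((A:ℂ) + (B:ℂ) * Complex.I) - 1) := by
    rw [← key1, ← hw]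
    ring
  rw [hsplit]
  have hEnorm : ‖ψ ξ - M‖ ≤ C * ξ ^ (ν - δ) := by
    have := hCξ
    rwa [Real.norm_eq_abs, habs, _root_.abs_of_nonneg (Real.rpow_nonneg hξ0.le _)] at this
  have hterm1 : ‖(c:ℂ)⁻¹ * (Complex.exp ((↑(-(ν * r)) : ℂ) + (↑(-(2 * φ / π * t)) : ℂ) * Complex.I) * (ψ ξ - M))‖
      ≤ c⁻¹ * (C * ξ ^ (-δ)) := by
    rw [norm_mul, norm_mul]
    have h1 : ‖(c:ℂ)⁻¹‖ = c⁻¹ := by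
      rw [norm_inv, Complex.norm_real, Real.norm_eq_abs, _root_.abs_of_pos hc]
    rw [h1]
    have h2 : ‖Complex.exp ((↑(-(ν * r)) : ℂ) + (↑(-(2 * φ / π * t)) : ℂ) * Complex.I)‖ ≤ ξ ^ (-ν) := hwabs
    have h3 : ξ ^ (-ν) * (C * ξ ^ (ν - δ)) = C * ξ ^ (-δ) := by
      rw [mul_comm (ξ ^ (-ν)), mul_assoc, ← Real.rpow_add hξ0]
      congr 1
      ring
    have h4 : ‖Complex.exp ((↑(-(ν * r)) : ℂ) + (↑(-(2 * φ / π * t)) : ℂ) * Complex.I)‖ * ‖ψ ξ - M‖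
        ≤ ξ ^ (-ν) * (C * ξ ^ (ν - δ)) := by
      apply mul_le_mul h2 hEnorm (norm_nonneg _) (Real.rpow_nonneg hξ0.le _)
    rw [← h3]
    exact mul_le_mul_of_nonneg_left h4 (by positivity)
  have hmono1 : ξ ^ (-δ) ≤ ξ ^ (-(min δ 1)) :=
    Real.rpow_le_rpow_of_exponent_le hξ1 (by simp [min_le_left])
  have hmono2 : ξ ^ (-(1:ℝ)) ≤ ξ ^ (-(min δ 1)) :=
    Real.rpow_le_rpow_of_exponent_le hξ1 (by simp [min_le_right])
  have hterm2 : ‖Complex.exp ((A:ℂ) + (B:ℂ) * Complex.I) - 1‖ ≤ 2 * K * ξ ^ (-(1:ℝ)) := by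
    rwa [Real.rpow_neg_one]
  have hgoal : ‖(fun ξ : ℝ => |ξ| ^ (-(min δ 1))) ξ‖ = ξ ^ (-(min δ 1)) := by
    simp only [Real.norm_eq_abs, habs]
    exact _root_.abs_of_nonneg (Real.rpow_nonneg hξ0.le _)
  calc ‖_ + _‖ ≤ ‖(c:ℂ)⁻¹ * (Complex.exp ((↑(-(ν * r)) : ℂ) + (↑(-(2 * φ / π * t)) : ℂ) * Complex.I) * (ψ ξ - M))‖
        + ‖Complex.exp ((A:ℂ) + (B:ℂ) * Complex.I) - 1‖ := norm_add_le _ _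
    _ ≤ c⁻¹ * (C * ξ ^ (-(min δ 1))) + 2 * K * ξ ^ (-(min δ 1)) := by
        have e1 : c⁻¹ * (C * ξ ^ (-δ)) ≤ c⁻¹ * (C * ξ ^ (-(min δ 1))) :=
          mul_le_mul_of_nonneg_left (mul_le_mul_of_nonneg_left hmono1 hC0.le)
            (inv_nonneg.mpr hc.le)
        have e2 : 2 * K * ξ ^ (-(1:ℝ)) ≤ 2 * K * ξ ^ (-(min δ 1)) :=
          mul_le_mul_of_nonneg_left hmono2 (by positivity)
        exact add_le_add (hterm1.trans e1) (hterm2.trans e2)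
    _ = (c⁻¹ * C + 2 * K) * ξ ^ (-(min δ 1)) := by ring
    _ = (c⁻¹ * C + 2 * K) * ‖(fun ξ : ℝ => |ξ| ^ (-(min δ 1))) ξ‖ := by rw [hgoal]

/-- Lemma 4.1(a): if `ψ(ξ) = c e^{±iφ}|ξ|^ν + O(|ξ|^{ν-δ})` as `ξ → ±∞`, then
`ψ_norm(ξ) := c⁻¹(1-iξ)^{-ν₊}(1+iξ)^{-ν₋} ψ(ξ) = 1 + O(|ξ|^{-δ'})` for some `δ' > 0`. -/
theorem stmt_9 (ν δ c φ : ℝ) (hν : ν ∈ Set.Ioo (0 : ℝ) 2) (hδ : 0 < δ) (hc : 0 < c)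
    (hφ : φ ∈ Set.Ioo (-(π / 2)) (π / 2))
    (ψ : ℝ → ℂ)
    (hp : (fun ξ : ℝ => ψ ξ - (c : ℂ) * Complex.exp (Complex.I * φ) * (|ξ| : ℝ) ^ (ν : ℂ))
        =O[atTop] fun ξ : ℝ => |ξ| ^ (ν - δ))
    (hmn : (fun ξ : ℝ => ψ ξ - (c : ℂ) * Complex.exp (-(Complex.I * φ)) * (|ξ| : ℝ) ^ (ν : ℂ))
        =O[atBot] fun ξ : ℝ => |ξ| ^ (ν - δ)) :
    ∃ δ' : ℝ, 0 < δ' ∧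
      ((fun ξ : ℝ => (c : ℂ)⁻¹ * (1 - Complex.I * ξ) ^ (-(((ν / 2 - φ / π) : ℝ) : ℂ))
            * (1 + Complex.I * ξ) ^ (-(((ν / 2 + φ / π) : ℝ) : ℂ)) * ψ ξ - 1)
          =O[atTop] fun ξ : ℝ => |ξ| ^ (-δ')) ∧
      ((fun ξ : ℝ => (c : ℂ)⁻¹ * (1 - Complex.I * ξ) ^ (-(((ν / 2 - φ / π) : ℝ) : ℂ))
            * (1 + Complex.I * ξ) ^ (-(((ν / 2 + φ / π) : ℝ) : ℂ)) * ψ ξ - 1)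
          =O[atBot] fun ξ : ℝ => |ξ| ^ (-δ')) := by
  refine ⟨min δ 1, lt_min hδ one_pos, ?_, ?_⟩
  · exact key_atTop ν δ c φ hν.1 hδ hc ψ hp
  · have h1 : (fun ξ : ℝ => ψ (-ξ) - (c : ℂ) * Complex.exp (Complex.I * ((-φ : ℝ) : ℂ)) * (|ξ| : ℝ) ^ (ν : ℂ))
        =O[atTop] fun ξ : ℝ => |ξ| ^ (ν - δ) := by
      have h := hmn.comp_tendsto tendsto_neg_atTop_atBot
      simp only [Function.comp_def, abs_neg] at h
      refine h.congr (fun x => ?_) (fun x => rfl)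
      push_cast
      ring_nf
    have h2 := key_atTop ν δ c (-φ) hν.1 hδ hc (fun ξ => ψ (-ξ)) h1
    have h3 := h2.comp_tendsto tendsto_neg_atBot_atTop
    refine h3.congr (fun x => ?_) (fun x => by simp [Function.comp_def])
    simp only [Function.comp_def, neg_neg]
    have b1 : (1 - Complex.I * ((-x : ℝ) : ℂ)) = 1 + Complex.I * x := by push_cast; ring
    have b2 : (1 + Complex.I * ((-x : ℝ) : ℂ)) = 1 - Complex.I * x := by push_cast; ring
    have e1 : ((ν / 2 - (-φ) / π : ℝ) : ℂ) = ((ν / 2 + φ / π : ℝ) : ℂ) := by push_cast; ring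
    have e2 : ((ν / 2 + (-φ) / π : ℝ) : ℂ) = ((ν / 2 - φ / π : ℝ) : ℂ) := by push_cast; ring
    rw [b1, b2, e1, e2]
    ring
end

section
/- For the Meixner characteristic exponent ψ⁰(ξ) = 2δ[ln cosh((aξ - ib)/2) - ln cos(b/2)] with δ, a > 0 and b ∈ (-π, π): ψ⁰ extends analytically to ℂ \ i((-∞, (-π+b)/a] ∪ [(π+b)/a, +∞)), and for each γ ∈ (0, π/2), ψ⁰(ξ) ~ aδξ as ξ → ∞ with |arg ξ| ≤ γ. -/
open Complex Real Filter

private lemma coshre' (z : ℂ) : (Complex.cosh z).re = Real.cosh z.re * Real.cos z.im := by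
  rw [show Complex.cosh z = (Complex.exp z + Complex.exp (-z)) / 2 from rfl]
  simp [Complex.div_re, Complex.exp_re, Complex.normSq, Real.cosh_eq]
  ring

private lemma one_add_exp_re_pos {w : ℂ} (hw : w.re < 0) : 0 < (1 + Complex.exp w).re := by
  have h1 : ‖Complex.exp w‖ < 1 := by
    rw [Complex.norm_exp, Real.exp_lt_one_iff]; exact hw
  have h2 : |(Complex.exp w).re| ≤ ‖Complex.exp w‖ := Complex.abs_re_le_norm _
  have h3 := abs_lt.mp (lt_of_le_of_lt h2 h1)
  simp only [Complex.add_re, Complex.one_re]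
  linarith [h3.1]

private lemma keyR (v : ℂ) (hre : 0 < v.re) (him : |v.im| < π) :
    Complex.log (Complex.cosh (v/2)) =
      v/2 + Complex.log (1 + Complex.exp (-v)) - Complex.log 2 := by
  have hvre : (-v).re < 0 := by simp [hre]
  have hre1 : 0 < (1 + Complex.exp (-v)).re := one_add_exp_re_pos hvre
  have hne : (1 + Complex.exp (-v)) ≠ 0 := fun h => by simp [h] at hre1
  set R := v/2 + Complex.log (1 + Complex.exp (-v)) - Complex.log 2 with hR
  have hexp : Complex.exp R = Complex.cosh (v/2) := by
    rw [hR, Complex.exp_sub, Complex.exp_add, Complex.exp_log hne,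
      Complex.exp_log (two_ne_zero)]
    have h3 : Complex.exp (v/2) * Complex.exp (-v) = Complex.exp (-(v/2)) := by
      rw [← Complex.exp_add]; ring_nf
    have h4 : Complex.exp (v/2) * (1 + Complex.exp (-v))
        = Complex.exp (v/2) + Complex.exp (-(v/2)) := by rw [mul_add, mul_one, h3]
    rw [h4]
    rfl
  have harg : |(Complex.log (1 + Complex.exp (-v))).im| < π/2 := by
    rw [Complex.log_im]; exact Complex.abs_arg_lt_pi_div_two_iff.mpr (Or.inl hre1)
  have hlog2 : (Complex.log 2).im = 0 := by
    have h2 : (2:ℂ) = ((2:ℝ):ℂ) := by norm_num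
    rw [Complex.log_im, h2]
    exact Complex.arg_ofReal_of_nonneg (by norm_num)
  have hv2 : (v/2).im = v.im/2 := by
    simp [Complex.div_im, Complex.normSq]; try ring
  have habs1 := abs_lt.mp him
  have habs2 := abs_lt.mp harg
  have h5 : -π < R.im := by
    rw [hR]; simp only [Complex.sub_im, Complex.add_im, hlog2, hv2]; linarith
  have h6 : R.im ≤ π := by
    rw [hR]; simp only [Complex.sub_im, Complex.add_im, hlog2, hv2]; linarith
  rw [← hexp, Complex.log_exp h5 h6]

private lemma keyL (v : ℂ) (hre : v.re < 0) (him : |v.im| < π) :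
    Complex.log (Complex.cosh (v/2)) =
      -(v/2) + Complex.log (1 + Complex.exp v) - Complex.log 2 := by
  have h := keyR (-v) (by simp; linarith) (by simpa using him)
  rw [show (-v)/2 = -(v/2) by ring, Complex.cosh_neg, neg_neg] at h
  exact h

/-- Meixner: `ψ⁰(ξ) = 2δ[ln cosh((aξ-ib)/2) - ln cos(b/2)]` extends analytically to
`ℂ \ i((-∞,(-π+b)/a] ∪ [(π+b)/a,∞))`, and `ψ⁰(ξ) ~ aδξ` as `ξ → ∞` in each cone
`{|arg ξ| ≤ γ}`, `γ ∈ (0, π/2)`. -/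
theorem stmt_14 (δ a b : ℝ) (hδ : 0 < δ) (ha : 0 < a) (hb : b ∈ Set.Ioo (-π) π) :
    ∃ F : ℂ → ℂ,
      AnalyticOn ℂ F
        {ξ : ℂ | ¬(ξ.re = 0 ∧ (ξ.im ≤ (-π + b) / a ∨ (π + b) / a ≤ ξ.im))} ∧
      (∀ ξ : ℝ, F (ξ : ℂ) =
        2 * δ * (Complex.log (Complex.cosh ((a * ξ - Complex.I * b) / 2))
          - Complex.log ((Real.cos (b / 2) : ℂ)))) ∧
      (∀ γ ∈ Set.Ioo (0 : ℝ) (π / 2),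
        Tendsto (fun ξ : ℂ => F ξ / ((a : ℂ) * (δ : ℂ) * ξ))
          (Filter.comap (fun z : ℂ => ‖z‖) atTop ⊓ Filter.principal {ξ : ℂ | |Complex.arg ξ| ≤ γ})
          (nhds 1)) := by
  obtain ⟨hb1, hb2⟩ := hb
  set u : ℂ → ℂ := fun ξ => (a:ℂ)*ξ - Complex.I*(b:ℂ) with hu
  set lc : ℂ := Complex.log ((Real.cos (b / 2) : ℂ)) with hlc
  set N : ℂ → ℂ := fun ξ =>
    -Complex.I*(δ:ℂ)*(b:ℂ) +
      2*(δ:ℂ)*(Complex.log (1 + Complex.exp (-(u ξ))) - Complex.log 2 - lc) with hN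
  set Fr : ℂ → ℂ := fun ξ => (a:ℂ)*(δ:ℂ)*ξ + N ξ with hFr
  set Fl : ℂ → ℂ := fun ξ =>
    -((a:ℂ)*(δ:ℂ)*ξ) + (Complex.I*(δ:ℂ)*(b:ℂ) +
      2*(δ:ℂ)*(Complex.log (1 + Complex.exp (u ξ)) - Complex.log 2 - lc)) with hFl
  set Fm : ℂ → ℂ := fun ξ =>
    2*(δ:ℂ)*(Complex.log (Complex.cosh (u ξ / 2)) - lc) with hFm
  set F : ℂ → ℂ := fun ξ => if 0 < ξ.re then Fr ξ else if ξ.re < 0 then Fl ξ else Fm ξ with hF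
  have hure : ∀ ξ : ℂ, (u ξ).re = a * ξ.re := by intro ξ; simp [hu]
  have huim : ∀ ξ : ℂ, (u ξ).im = a * ξ.im - b := by intro ξ; simp [hu]
  -- bridges
  have bridgeR : ∀ ξ : ℂ, 0 < ξ.re → -π < a * ξ.im - b → a * ξ.im - b < π → Fr ξ = Fm ξ := by
    intro ξ h1 h2 h3
    have hk := keyR (u ξ) (by rw [hure]; positivity) (by rw [huim, abs_lt]; exact ⟨h2, h3⟩)
    simp only [hFr, hFm, hN, hk]
    ring
  have bridgeL : ∀ ξ : ℂ, ξ.re < 0 → -π < a * ξ.im - b → a * ξ.im - b < π → Fl ξ = Fm ξ := by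
    intro ξ h1 h2 h3
    have hk := keyL (u ξ) (by rw [hure]; exact mul_neg_of_pos_of_neg ha h1)
      (by rw [huim, abs_lt]; exact ⟨h2, h3⟩)
    simp only [hFl, hFm, hk]
    ring
  refine ⟨F, ?_, ?_, ?_⟩
  · -- analyticity
    apply AnalyticOnNhd.analyticOn
    intro x hx
    simp only [Set.mem_setOf_eq] at hx
    have hopenR : IsOpen {ξ : ℂ | 0 < ξ.re} := isOpen_lt continuous_const Complex.continuous_re
    have hopenL : IsOpen {ξ : ℂ | ξ.re < 0} := isOpen_lt Complex.continuous_re continuous_const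
    have hanu : ∀ y : ℂ, AnalyticAt ℂ u y := by
      intro y
      exact (analyticAt_const.mul (analyticAt_id)).sub analyticAt_const
    rcases lt_trichotomy x.re 0 with hxre | hxre | hxre
    · -- left
      have hanFl : AnalyticAt ℂ Fl x := by
        have h1 : AnalyticAt ℂ (fun ξ => 1 + Complex.exp (u ξ)) x :=
          analyticAt_const.add (hanu x).cexp
        have hmem : (1 + Complex.exp (u x)) ∈ Complex.slitPlane := by
          rw [Complex.mem_slitPlane_iff]
          exact Or.inl (one_add_exp_re_pos (by rw [hure]; exact mul_neg_of_pos_of_neg ha hxre))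
        have h2 : AnalyticAt ℂ (fun ξ => Complex.log (1 + Complex.exp (u ξ))) x :=
          h1.clog hmem
        exact ((analyticAt_const.mul analyticAt_id).neg).add
          (analyticAt_const.add (analyticAt_const.mul ((h2.sub analyticAt_const).sub
            analyticAt_const)))
      apply hanFl.congr
      filter_upwards [hopenL.mem_nhds hxre] with ξ hξ
      have hξ' : ¬ (0 < ξ.re) := by linarith
      simp only [hF, if_neg hξ', if_pos hξ]
    · -- middle strip
      rw [hxre] at hx
      push_neg at hx
      obtain ⟨hs1, hs2⟩ := hx rfl
      have hV : IsOpen {ξ : ℂ | (-π + b)/a < ξ.im ∧ ξ.im < (π + b)/a} := by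
        exact IsOpen.inter (isOpen_lt continuous_const Complex.continuous_im)
          (isOpen_lt Complex.continuous_im continuous_const)
      have hxV : x ∈ {ξ : ℂ | (-π + b)/a < ξ.im ∧ ξ.im < (π + b)/a} := ⟨hs1, hs2⟩
      have hstrip : ∀ ξ : ℂ, (-π + b)/a < ξ.im → ξ.im < (π + b)/a →
          -π < a * ξ.im - b ∧ a * ξ.im - b < π := by
        intro ξ h1 h2
        constructor
        · have := (div_lt_iff₀ ha).mp h1; linarith [mul_comm ξ.im a]
        · have := (lt_div_iff₀ ha).mp h2; linarith [mul_comm ξ.im a]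
      have hanFm : AnalyticAt ℂ Fm x := by
        have h1 : AnalyticAt ℂ (fun ξ => Complex.cosh (u ξ / 2)) x := by
          have : (fun ξ => Complex.cosh (u ξ / 2)) =
              fun ξ => (Complex.exp (u ξ / 2) + Complex.exp (-(u ξ / 2))) / 2 := rfl
          rw [this]
          exact (((hanu x).div analyticAt_const (two_ne_zero)).cexp.add
            ((hanu x).div analyticAt_const (two_ne_zero)).neg.cexp).div
              analyticAt_const (two_ne_zero)
        have hmem : Complex.cosh (u x / 2) ∈ Complex.slitPlane := by
          rw [Complex.mem_slitPlane_iff]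
          left
          rw [coshre']
          have him2 : (u x / 2).im = (a * x.im - b)/2 := by
            rw [show (u x / 2).im = (u x).im / 2 by
              simp [Complex.div_im, Complex.normSq]; try ring, huim]
          obtain ⟨hq1, hq2⟩ := hstrip x hs1 hs2
          have hcos : 0 < Real.cos ((u x / 2).im) := by
            rw [him2]
            apply Real.cos_pos_of_mem_Ioo
            constructor <;> [linarith; linarith]
          exact mul_pos (Real.cosh_pos _) hcos
        exact analyticAt_const.mul ((h1.clog hmem).sub analyticAt_const)
      apply hanFm.congr
      filter_upwards [hV.mem_nhds hxV] with ξ hξ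
      obtain ⟨hξ1, hξ2⟩ := hξ
      obtain ⟨hq1, hq2⟩ := hstrip ξ hξ1 hξ2
      rcases lt_trichotomy ξ.re 0 with h | h | h
      · simp only [hF, if_neg (by linarith : ¬ (0 < ξ.re)), if_pos h]
        exact (bridgeL ξ h hq1 hq2).symm
      · simp only [hF, if_neg (by simp [h] : ¬ (0 < ξ.re)), if_neg (by simp [h] : ¬ (ξ.re < 0))]
      · simp only [hF, if_pos h]
        exact (bridgeR ξ h hq1 hq2).symm
    · -- right
      have hanFr : AnalyticAt ℂ Fr x := by
        have h1 : AnalyticAt ℂ (fun ξ => 1 + Complex.exp (-(u ξ))) x :=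
          analyticAt_const.add (hanu x).neg.cexp
        have hmem : (1 + Complex.exp (-(u x))) ∈ Complex.slitPlane := by
          rw [Complex.mem_slitPlane_iff]
          refine Or.inl (one_add_exp_re_pos ?_)
          simp only [Complex.neg_re, hure]
          nlinarith
        have h2 : AnalyticAt ℂ (fun ξ => Complex.log (1 + Complex.exp (-(u ξ)))) x :=
          h1.clog hmem
        exact (analyticAt_const.mul analyticAt_id).add
          (analyticAt_const.add (analyticAt_const.mul ((h2.sub analyticAt_const).sub
            analyticAt_const)))
      apply hanFr.congr
      filter_upwards [hopenR.mem_nhds hxre] with ξ hξ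
      simp only [hF, if_pos hξ]
  · -- value on reals
    intro ξ
    have hmb : -π < a * (0:ℝ) - b ∧ a * (0:ℝ) - b < π := by constructor <;> [linarith; linarith]
    have himξ : ((ξ:ℂ)).im = 0 := Complex.ofReal_im ξ
    have hreξ : ((ξ:ℂ)).re = ξ := Complex.ofReal_re ξ
    have hFm' : Fm (ξ:ℂ) = 2 * δ * (Complex.log (Complex.cosh ((a * ξ - Complex.I * b) / 2))
        - Complex.log ((Real.cos (b / 2) : ℂ))) := by
      simp only [hFm, hu, hlc]
    rcases lt_trichotomy ξ 0 with h | h | h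
    · calc F (ξ:ℂ) = Fl (ξ:ℂ) := by
            simp only [hF, hreξ, if_neg (by linarith : ¬ (0:ℝ) < ξ), if_pos h]
        _ = Fm (ξ:ℂ) := bridgeL (ξ:ℂ) (by rw [hreξ]; exact h) (by rw [himξ]; exact hmb.1)
            (by rw [himξ]; exact hmb.2)
        _ = _ := hFm'
    · calc F (ξ:ℂ) = Fm (ξ:ℂ) := by
            simp only [hF, h]
            norm_num
        _ = _ := hFm'
    · calc F (ξ:ℂ) = Fr (ξ:ℂ) := by simp only [hF, hreξ, if_pos h]
        _ = Fm (ξ:ℂ) := bridgeR (ξ:ℂ) (by rw [hreξ]; exact h) (by rw [himξ]; exact hmb.1)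
            (by rw [himξ]; exact hmb.2)
        _ = _ := hFm'
  · -- asymptotics
    intro γ hγ
    obtain ⟨hγ0, hγpi⟩ := hγ
    set l := Filter.comap (fun z : ℂ => ‖z‖) atTop ⊓
      Filter.principal {ξ : ℂ | |Complex.arg ξ| ≤ γ} with hl
    have hcosγ : 0 < Real.cos γ := Real.cos_pos_of_mem_Ioo ⟨by linarith, hγpi⟩
    have habs : Tendsto (fun ξ : ℂ => ‖ξ‖) l atTop :=
      tendsto_comap.mono_left inf_le_left
    have harg : ∀ᶠ ξ : ℂ in l, |Complex.arg ξ| ≤ γ :=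
      (Filter.eventually_principal.mpr (fun ξ h => h)).filter_mono inf_le_right
    have habs1 : ∀ᶠ ξ : ℂ in l, 1 ≤ ‖ξ‖ := habs.eventually (eventually_ge_atTop 1)
    have hrege : ∀ᶠ ξ : ℂ in l, Real.cos γ * ‖ξ‖ ≤ ξ.re := by
      filter_upwards [harg, habs1] with ξ h1 h2
      have hξ0 : ξ ≠ 0 := by
        intro h; rw [h] at h2; simp at h2; linarith
      have hc : Real.cos (Complex.arg ξ) = ξ.re / ‖ξ‖ := Complex.cos_arg hξ0
      have hmono : Real.cos γ ≤ Real.cos (Complex.arg ξ) := by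
        rw [← Real.cos_abs (Complex.arg ξ)]
        exact Real.cos_le_cos_of_nonneg_of_le_pi (abs_nonneg _) (by linarith [Real.pi_pos]) h1
      have habspos : 0 < ‖ξ‖ := by linarith
      calc Real.cos γ * ‖ξ‖ ≤ Real.cos (Complex.arg ξ) * ‖ξ‖ := by
            apply mul_le_mul_of_nonneg_right hmono (le_of_lt habspos)
        _ = ξ.re := by rw [hc]; field_simp
    have hrepos : ∀ᶠ ξ : ℂ in l, 0 < ξ.re := by
      filter_upwards [hrege, habs1] with ξ h1 h2
      nlinarith
    have hretop : Tendsto (fun ξ : ℂ => ξ.re) l atTop := by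
      apply tendsto_atTop_mono' l hrege
      exact (habs.const_mul_atTop hcosγ)
    have hexp0 : Tendsto (fun ξ : ℂ => Complex.exp (-(u ξ))) l (nhds 0) := by
      rw [tendsto_zero_iff_norm_tendsto_zero]
      have heq : (fun ξ : ℂ => ‖Complex.exp (-(u ξ))‖) = fun ξ : ℂ => Real.exp (-(a * ξ.re)) := by
        funext ξ
        rw [Complex.norm_exp]
        congr 1
        simp [hure]
      rw [heq]
      exact Real.tendsto_exp_atBot.comp
        (tendsto_neg_atBot_iff.mpr (hretop.const_mul_atTop ha))
    have hlog0 : Tendsto (fun ξ : ℂ => Complex.log (1 + Complex.exp (-(u ξ)))) l (nhds 0) := by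
      have hcont : ContinuousAt Complex.log 1 :=
        continuousAt_clog (by rw [Complex.mem_slitPlane_iff]; left; norm_num)
      have h1 : Tendsto (fun ξ : ℂ => 1 + Complex.exp (-(u ξ))) l (nhds (1 + 0)) :=
        tendsto_const_nhds.add hexp0
      rw [add_zero] at h1
      have := hcont.tendsto.comp h1
      rwa [Complex.log_one] at this
    have hinv0 : Tendsto (fun ξ : ℂ => ((a:ℂ)*(δ:ℂ)*ξ)⁻¹) l (nhds 0) := by
      rw [tendsto_zero_iff_norm_tendsto_zero]
      have heq : (fun ξ : ℂ => ‖((a:ℂ)*(δ:ℂ)*ξ)⁻¹‖) =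
          (fun ξ : ℂ => ((a*δ) * ‖ξ‖)⁻¹) := by
        funext ξ
        rw [norm_inv]
        congr 1
        rw [norm_mul, norm_mul]
        simp [abs_of_pos ha, abs_of_pos hδ]
        try ring
      rw [heq]
      exact (habs.const_mul_atTop (by positivity)).inv_tendsto_atTop
    have hNlim : Tendsto N l (nhds (-Complex.I*(δ:ℂ)*(b:ℂ) +
        2*(δ:ℂ)*((0:ℂ) - Complex.log 2 - lc))) := by
      apply tendsto_const_nhds.add
      exact tendsto_const_nhds.mul ((hlog0.sub tendsto_const_nhds).sub tendsto_const_nhds)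
    have hmain : Tendsto (fun ξ : ℂ => 1 + N ξ * ((a:ℂ)*(δ:ℂ)*ξ)⁻¹) l (nhds 1) := by
      have h := Filter.Tendsto.add
        (tendsto_const_nhds : Tendsto (fun _ : ℂ => (1:ℂ)) l (nhds 1)) (hNlim.mul hinv0)
      simpa using h
    apply hmain.congr'
    filter_upwards [hrepos, habs1] with ξ h1 h2
    have hξ0 : ξ ≠ 0 := by intro h; rw [h] at h1; simp at h1
    have hd : ((a:ℂ)*(δ:ℂ)*ξ) ≠ 0 := by
      apply mul_ne_zero (mul_ne_zero _ _) hξ0 <;>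
        simp [Complex.ofReal_ne_zero] <;> positivity
    have hFval : F ξ = (a:ℂ)*(δ:ℂ)*ξ + N ξ := by simp only [hF, if_pos h1, hFr]
    rw [hFval]
    field_simp
    rw [add_div _ (N ξ), mul_div_cancel_left₀ ξ (left_ne_zero_of_mul hd)]
end

section
/- Let α ∈ (0,1). The measure 𝒢(dt) = c·t^α dt on (0,∞) (c > 0) satisfies ∫ (t + t²)^{-1} 𝒢(dt) < ∞ (so 𝒢/t is a Stieltjes measure) but 𝒢(dt)/(t²) does not satisfy the Stieltjes condition ∫ (1+t)^{-1} t^{α-2} dt < ∞ fails at 0; for α ∈ (1,2), 𝒢(dt)/t² is a Stieltjes measure but 𝒢(dt)/t is not; for α = 1, neither 𝒢/t nor 𝒢/t² alone is a Stieltjes measure, but 𝒢(dt) = (t² + t)𝒢⁰(dt) for the Stieltjes measure 𝒢⁰(dt) = c·(t + t²)^{-1}·t dt = c·(1+t)^{-1} dt. -/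
open Real MeasureTheory Set

lemma my_aux_fin {f g₀ g₁ : ℝ → ℝ} (h₀ : IntegrableOn g₀ (Ioc 0 1))
    (h₁ : IntegrableOn g₁ (Ioi 1))
    (hf₀ : ∀ t ∈ Ioc (0:ℝ) 1, f t ≤ g₀ t) (hf₁ : ∀ t ∈ Ioi (1:ℝ), f t ≤ g₁ t) :
    ∫⁻ t in Ioi (0:ℝ), ENNReal.ofReal (f t) < ⊤ := by
  rw [← Ioc_union_Ioi_eq_Ioi (zero_le_one : (0:ℝ) ≤ 1),
    lintegral_union measurableSet_Ioi Ioc_disjoint_Ioi_same]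
  have A : ∫⁻ t in Ioc (0:ℝ) 1, ENNReal.ofReal (f t) ≤
      ∫⁻ t in Ioc (0:ℝ) 1, ENNReal.ofReal (g₀ t) :=
    setLIntegral_mono' measurableSet_Ioc fun t ht =>
      ENNReal.ofReal_le_ofReal (hf₀ t ht)
  have B : ∫⁻ t in Ioi (1:ℝ), ENNReal.ofReal (f t) ≤
      ∫⁻ t in Ioi (1:ℝ), ENNReal.ofReal (g₁ t) :=
    setLIntegral_mono' measurableSet_Ioi fun t ht =>
      ENNReal.ofReal_le_ofReal (hf₁ t ht)
  exact ENNReal.add_lt_top.2 ⟨A.trans_lt h₀.setLIntegral_lt_top,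
    B.trans_lt h₁.setLIntegral_lt_top⟩

lemma my_aux_inf {g f : ℝ → ℝ} {S : Set ℝ} (hS : MeasurableSet S) (hSsub : S ⊆ Ioi 0)
    (hg : Measurable g) (hg0 : ∀ t ∈ S, 0 ≤ g t) (hnot : ¬ IntegrableOn g S)
    (hf : ∀ t ∈ S, g t ≤ f t) :
    ¬ (∫⁻ t in Ioi (0:ℝ), ENNReal.ofReal (f t) < ⊤) := by
  intro H
  apply hnot
  refine ⟨hg.aestronglyMeasurable, ?_⟩
  rw [hasFiniteIntegral_iff_ofReal ?_]
  · calc ∫⁻ t in S, ENNReal.ofReal (g t) ≤ ∫⁻ t in S, ENNReal.ofReal (f t) :=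
        setLIntegral_mono' hS fun t ht => ENNReal.ofReal_le_ofReal (hf t ht)
      _ ≤ ∫⁻ t in Ioi (0:ℝ), ENNReal.ofReal (f t) := lintegral_mono_set hSsub
      _ < ⊤ := H
  · filter_upwards [ae_restrict_mem hS] with t ht using hg0 t ht

lemma my_rpow_sub1 {t : ℝ} (ht : 0 < t) (α : ℝ) : t ^ (α - 1) = t ^ α / t := by
  rw [rpow_sub ht, rpow_one]

lemma my_rpow_sub2 {t : ℝ} (ht : 0 < t) (α : ℝ) : t ^ (α - 2) = t ^ α / t ^ 2 := by
  rw [rpow_sub ht, show (2:ℝ) = ((2:ℕ):ℝ) by norm_num, rpow_natCast]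

lemma my_not_int {c s : ℝ} (hc : 0 < c) {S : Set ℝ}
    (h : ¬ IntegrableOn (fun t : ℝ => t ^ s) S) :
    ¬ IntegrableOn (fun t : ℝ => c * t ^ s) S := by
  intro h2
  apply h
  have h3 := h2.const_mul c⁻¹
  simpa [IntegrableOn, ← mul_assoc, inv_mul_cancel₀ hc.ne'] using h3

/-- Proposition 3.11: classification of the stable measure `𝒢(dt) = c t^α dt`.
For `α ∈ (0,1)`, `𝒢/t` is a Stieltjes measure but `𝒢/t²` is not; for `α ∈ (1,2)`,
`𝒢/t²` is a Stieltjes measure but `𝒢/t` is not; for `α = 1`, neither is, yet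
`𝒢(dt) = (t² + t)𝒢⁰(dt)` with the Stieltjes measure `𝒢⁰(dt) = c(1+t)⁻¹ dt`. -/
theorem stmt_16 (α c : ℝ) (hα : α ∈ Set.Ioo (0 : ℝ) 2) (hc : 0 < c) :
    (α < 1 →
      (∫⁻ t in Set.Ioi (0 : ℝ), ENNReal.ofReal ((1 + t)⁻¹ * (c * t ^ α / t)) < ⊤) ∧
      ¬(∫⁻ t in Set.Ioi (0 : ℝ), ENNReal.ofReal ((1 + t)⁻¹ * (c * t ^ α / t ^ 2)) < ⊤)) ∧
    (1 < α →
      (∫⁻ t in Set.Ioi (0 : ℝ), ENNReal.ofReal ((1 + t)⁻¹ * (c * t ^ α / t ^ 2)) < ⊤) ∧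
      ¬(∫⁻ t in Set.Ioi (0 : ℝ), ENNReal.ofReal ((1 + t)⁻¹ * (c * t ^ α / t)) < ⊤)) ∧
    (α = 1 →
      ¬(∫⁻ t in Set.Ioi (0 : ℝ), ENNReal.ofReal ((1 + t)⁻¹ * (c * t ^ α / t)) < ⊤) ∧
      ¬(∫⁻ t in Set.Ioi (0 : ℝ), ENNReal.ofReal ((1 + t)⁻¹ * (c * t ^ α / t ^ 2)) < ⊤) ∧
      (∫⁻ t in Set.Ioi (0 : ℝ), ENNReal.ofReal ((1 + t)⁻¹ * (c * (1 + t)⁻¹)) < ⊤) ∧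
      (∀ t ∈ Set.Ioi (0 : ℝ), c * t ^ α = (t ^ 2 + t) * (c * (1 + t)⁻¹))) := by
  obtain ⟨hα0, hα2⟩ := hα
  have meas_rpow : ∀ a s : ℝ, Measurable (fun t : ℝ => a * t ^ s) := fun a s => by
    fun_prop
  -- infinite near 0 for /t² when α ≤ 1
  have inf0 : α ≤ 1 →
      ¬(∫⁻ t in Set.Ioi (0 : ℝ), ENNReal.ofReal ((1 + t)⁻¹ * (c * t ^ α / t ^ 2)) < ⊤) := by
    intro hle
    apply my_aux_inf (g := fun t => c / 2 * t ^ (α - 2)) measurableSet_Ioo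
      Ioo_subset_Ioi_self (meas_rpow _ _)
    · intro t ht
      have ht0 : 0 < t := ht.1
      positivity
    · apply my_not_int (by positivity)
      rw [intervalIntegral.integrableOn_Ioo_rpow_iff zero_lt_one]
      linarith
    · intro t ht
      have ht0 : 0 < t := ht.1
      have ht1 : t < 1 := ht.2
      have h1 : (2:ℝ)⁻¹ ≤ (1 + t)⁻¹ := by
        apply inv_anti₀ (by linarith) (by linarith)
      rw [my_rpow_sub2 ht0]
      have h2 : 0 ≤ c * t ^ α / t ^ 2 := by positivity
      calc c / 2 * (t ^ α / t ^ 2) = (2:ℝ)⁻¹ * (c * t ^ α / t ^ 2) := by ring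
        _ ≤ (1 + t)⁻¹ * (c * t ^ α / t ^ 2) := by gcongr
  -- infinite near ∞ for /t when α ≥ 1
  have infinf : 1 ≤ α →
      ¬(∫⁻ t in Set.Ioi (0 : ℝ), ENNReal.ofReal ((1 + t)⁻¹ * (c * t ^ α / t)) < ⊤) := by
    intro hle
    apply my_aux_inf (g := fun t => c / 2 * t ^ (α - 2)) measurableSet_Ioi
      (Ioi_subset_Ioi zero_le_one) (meas_rpow _ _)
    · intro t ht
      have ht0 : 0 < t := lt_trans zero_lt_one ht
      positivity
    · apply my_not_int (by positivity)
      rw [integrableOn_Ioi_rpow_iff zero_lt_one]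
      linarith
    · intro t ht
      have ht1 : (1:ℝ) < t := ht
      have ht0 : 0 < t := lt_trans zero_lt_one ht1
      have h1 : (2 * t)⁻¹ ≤ (1 + t)⁻¹ := by
        apply inv_anti₀ (by linarith) (by linarith)
      rw [my_rpow_sub2 ht0]
      have h2 : 0 ≤ c * t ^ α / t := by positivity
      calc c / 2 * (t ^ α / t ^ 2) = (2 * t)⁻¹ * (c * t ^ α / t) := by
            field_simp
        _ ≤ (1 + t)⁻¹ * (c * t ^ α / t) := by gcongr
  -- finite for /t when α < 1
  have fin1 : α < 1 →
      (∫⁻ t in Set.Ioi (0 : ℝ), ENNReal.ofReal ((1 + t)⁻¹ * (c * t ^ α / t)) < ⊤) := by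
    intro hlt
    apply my_aux_fin (g₀ := fun t => c * t ^ (α - 1)) (g₁ := fun t => c * t ^ (α - 2))
    · apply (integrableOn_Ioc_iff_integrableOn_Ioo).2
      exact (((intervalIntegral.integrableOn_Ioo_rpow_iff zero_lt_one).2 (by linarith)).const_mul c)
    · exact ((integrableOn_Ioi_rpow_iff zero_lt_one).2 (by linarith)).const_mul c
    · intro t ht
      have ht0 : 0 < t := ht.1
      have h1 : (1 + t)⁻¹ ≤ 1 := by
        rw [inv_le_one₀ (by linarith)]; linarith
      rw [my_rpow_sub1 ht0]
      have h2 : 0 ≤ c * t ^ α / t := by positivity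
      calc (1 + t)⁻¹ * (c * t ^ α / t) ≤ 1 * (c * t ^ α / t) := by gcongr
        _ = c * (t ^ α / t) := by ring
    · intro t ht
      have ht1 : (1:ℝ) < t := ht
      have ht0 : 0 < t := lt_trans zero_lt_one ht1
      have h1 : (1 + t)⁻¹ ≤ t⁻¹ := inv_anti₀ ht0 (by linarith)
      have h2 : 0 ≤ c * t ^ α / t := by positivity
      rw [my_rpow_sub2 ht0]
      calc (1 + t)⁻¹ * (c * t ^ α / t) ≤ t⁻¹ * (c * t ^ α / t) := by gcongr
        _ = c * (t ^ α / t ^ 2) := by field_simp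
  -- finite for /t² when α > 1
  have fin2 : 1 < α →
      (∫⁻ t in Set.Ioi (0 : ℝ), ENNReal.ofReal ((1 + t)⁻¹ * (c * t ^ α / t ^ 2)) < ⊤) := by
    intro hlt
    apply my_aux_fin (g₀ := fun t => c * t ^ (α - 2)) (g₁ := fun t => c * t ^ (α - 3))
    · apply (integrableOn_Ioc_iff_integrableOn_Ioo).2
      exact (((intervalIntegral.integrableOn_Ioo_rpow_iff zero_lt_one).2 (by linarith)).const_mul c)
    · exact ((integrableOn_Ioi_rpow_iff zero_lt_one).2 (by linarith)).const_mul c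
    · intro t ht
      have ht0 : 0 < t := ht.1
      have h1 : (1 + t)⁻¹ ≤ 1 := by
        rw [inv_le_one₀ (by linarith)]; linarith
      rw [my_rpow_sub2 ht0]
      have h2 : 0 ≤ c * t ^ α / t ^ 2 := by positivity
      calc (1 + t)⁻¹ * (c * t ^ α / t ^ 2) ≤ 1 * (c * t ^ α / t ^ 2) := by gcongr
        _ = c * (t ^ α / t ^ 2) := by ring
    · intro t ht
      have ht1 : (1:ℝ) < t := ht
      have ht0 : 0 < t := lt_trans zero_lt_one ht1
      have h1 : (1 + t)⁻¹ ≤ t⁻¹ := inv_anti₀ ht0 (by linarith)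
      have h2 : 0 ≤ c * t ^ α / t ^ 2 := by positivity
      have h3 : t ^ (α - 3) = t ^ α / t ^ 3 := by
        rw [rpow_sub ht0, show (3:ℝ) = ((3:ℕ):ℝ) by norm_num, rpow_natCast]
      rw [h3]
      calc (1 + t)⁻¹ * (c * t ^ α / t ^ 2) ≤ t⁻¹ * (c * t ^ α / t ^ 2) := by gcongr
        _ = c * (t ^ α / t ^ 3) := by field_simp
  refine ⟨fun h => ⟨fin1 h, inf0 h.le⟩, fun h => ⟨fin2 h, infinf h.le⟩, fun h => ?_⟩
  subst h
  refine ⟨infinf le_rfl, inf0 le_rfl, ?_, ?_⟩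
  · apply my_aux_fin (g₀ := fun _ => c) (g₁ := fun t => c * t ^ (-2 : ℝ))
    · exact integrableOn_const measure_Ioc_lt_top.ne
    · exact ((integrableOn_Ioi_rpow_iff zero_lt_one).2 (by norm_num)).const_mul c
    · intro t ht
      have ht0 : 0 < t := ht.1
      have h1 : (1 + t)⁻¹ ≤ 1 := by
        rw [inv_le_one₀ (by linarith)]; linarith
      calc (1 + t)⁻¹ * (c * (1 + t)⁻¹) ≤ 1 * (c * 1) :=
            mul_le_mul h1 (by nlinarith [mul_le_mul_of_nonneg_left h1 hc.le])
              (by positivity) zero_le_one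
        _ = c := by ring
    · intro t ht
      have ht1 : (1:ℝ) < t := ht
      have ht0 : 0 < t := lt_trans zero_lt_one ht1
      have h1 : (1 + t)⁻¹ ≤ t⁻¹ := inv_anti₀ ht0 (by linarith)
      have h3 : t ^ (-2 : ℝ) = (t ^ 2)⁻¹ := by
        rw [show (-2:ℝ) = -((2:ℕ):ℝ) by norm_num, rpow_neg ht0.le, rpow_natCast]
      rw [h3]
      calc (1 + t)⁻¹ * (c * (1 + t)⁻¹) ≤ t⁻¹ * (c * t⁻¹) :=
            mul_le_mul h1 (by nlinarith [mul_le_mul_of_nonneg_left h1 hc.le])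
              (by positivity) (by positivity)
        _ = c * (t ^ 2)⁻¹ := by rw [sq, mul_inv]; ring
  · intro t ht
    have ht0 : 0 < t := ht
    rw [rpow_one]
    field_simp
    ring
end
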